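/- arXiv:2603.00899 — 4 statements merged into one kernel-verified Lean document; each statement's English description precedes it below -/
import Mathlib

section
/- Let (G,i) be a rooted graph on a finite vertex set V and let k < ℓ be nonnegative integers. If (G,i) allows the nullity pair (k,ℓ) with i-SNIP, then e(G − i) + 1 ≥ (ℓ+1)ℓ/2, where G − i is the induced subgraph of G on V∖{i} and e(G − i) is its number of edges. -/
open Matrix

variable {V : Type*} [Fintype V] [DecidableEq V]

/-- The nullity of a real matrix: the dimension of its kernel. -/
noncomputable def nullity (A : Matrix V V ℝ) : ℕ :=
  Module.finrank ℝ (LinearMap.ker A.mulVecLin)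

/-- `delRC A i` is the principal submatrix of `A` obtained by deleting row and column `i`. -/
def delRC (A : Matrix V V ℝ) (i : V) : Matrix {j // j ≠ i} {j // j ≠ i} ℝ :=
  A.submatrix Subtype.val Subtype.val

/-- `A ∈ S(G)`: `A` is symmetric and its off-diagonal entries are nonzero precisely at edges. -/
def InS (G : SimpleGraph V) (A : Matrix V V ℝ) : Prop :=
  A.IsSymm ∧ ∀ j k : V, j ≠ k → (A j k ≠ 0 ↔ G.Adj j k)

/-- The i-strong nullity interlacing property. -/
def HasSNIP (A : Matrix V V ℝ) (i : V) : Prop :=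
  ∀ X : Matrix V V ℝ, X.IsSymm → (∀ j k, A j k * X j k = 0) → (∀ j, X j j = 0) →
    (∀ j k, j ≠ i → (A * X) j k = 0) → X = 0

/-- The Strong Arnold Property. -/
def HasSAP (A : Matrix V V ℝ) : Prop :=
  ∀ X : Matrix V V ℝ, X.IsSymm → (∀ j k, A j k * X j k = 0) → (∀ j, X j j = 0) →
    A * X = 0 → X = 0

/-- The parameter ξξ(G,i): the maximum of k+ℓ over pairs k ≤ ℓ such that (G,i)
allows the nullity pair (k,ℓ) with i-SNIP. -/
noncomputable def xixi (G : SimpleGraph V) (i : V) : ℕ :=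
  sSup {s | ∃ k ℓ : ℕ, k ≤ ℓ ∧ s = k + ℓ ∧ ∃ A : Matrix V V ℝ,
    InS G A ∧ HasSNIP A i ∧ nullity A = k ∧ nullity (delRC A i) = ℓ}


set_option linter.unusedSectionVars false
set_option maxHeartbeats 1600000

namespace SnipAux
open Module
open scoped Classical


variable {W : Type*} [Fintype W] [DecidableEq W]

lemma mul_vecMulVec (B : Matrix W W ℝ) (u v : W → ℝ) :
    B * vecMulVec u v = vecMulVec (B *ᵥ u) v := by
  ext r c
  simp [Matrix.mul_apply, vecMulVec_apply, Matrix.mulVec, dotProduct,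
    Finset.sum_mul, mul_assoc]

lemma sym2_sum (g : W → W → ℝ) (hd : ∀ a, g a a = 0) :
    (∑ e : Sym2 W, Sym2.lift ⟨fun a b => g a b + g b a, fun a b => by ring⟩ e)
      = ∑ a, ∑ b, g a b := by
  classical
  have hprod : ∑ a, ∑ b, g a b = ∑ x : W × W, g x.1 x.2 := by
    rw [← Finset.sum_product']; rfl
  rw [hprod]
  have := Finset.sum_fiberwise_of_maps_to
    (g := fun x : W × W => Sym2.mk x.1 x.2) (s := (Finset.univ : Finset (W × W)))
    (t := (Finset.univ : Finset (Sym2 W))) (f := fun x : W × W => g x.1 x.2)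
    (fun x _ => Finset.mem_univ _)
  rw [← this]
  apply Finset.sum_congr rfl
  intro e _
  induction e using Sym2.inductionOn with
  | _ a b =>
    rcases eq_or_ne a b with h | h
    · subst h
      have : (Finset.univ.filter (fun x : W × W => Sym2.mk x.1 x.2 = s(a, a))) = {(a, a)} := by
        ext ⟨x, y⟩
        simp [Sym2.eq_iff]
      rw [this]
      simp [hd a]
    · have : (Finset.univ.filter (fun x : W × W => Sym2.mk x.1 x.2 = s(a, b)))
          = {(a, b), (b, a)} := by
        ext ⟨x, y⟩
        simp [Sym2.eq_iff]
      rw [this]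
      rw [Finset.sum_insert (by simp [Prod.ext_iff]; tauto)]
      simp

-- dual family
lemma exists_dual {m : ℕ} (w : Fin m → (W → ℝ)) (hw : LinearIndependent ℝ w) :
    ∃ d : Fin m → (W → ℝ), ∀ a b, d a ⬝ᵥ w b = if a = b then 1 else 0 := by
  classical
  set M : Matrix (Fin m) W ℝ := Matrix.of w with hM
  set Γ : Matrix (Fin m) (Fin m) ℝ := M * Mᵀ with hΓ
  have hinj : Function.Injective Γ.mulVecLin := by
    rw [← LinearMap.ker_eq_bot, LinearMap.ker_eq_bot']
    intro x hx
    have hx' : Γ *ᵥ x = 0 := hx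
    have h0 : (x ᵥ* M) ⬝ᵥ (x ᵥ* M) = 0 := by
      have h1 : x ⬝ᵥ (Γ *ᵥ x) = 0 := by rw [hx']; simp
      rw [hΓ, ← Matrix.mulVec_mulVec, Matrix.dotProduct_mulVec,
        Matrix.mulVec_transpose] at h1
      exact h1
    have hz : x ᵥ* M = 0 := by
      rwa [dotProduct_self_eq_zero] at h0
    have hsum : ∑ a, x a • w a = 0 := by
      funext j
      have h2 := congrFun hz j
      simpa [Matrix.vecMul, dotProduct, hM] using h2
    exact funext (Fintype.linearIndependent_iff.mp hw x hsum)
  have hbij : Function.Bijective Γ.mulVecLin :=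
    ⟨hinj, (LinearMap.injective_iff_surjective).mp hinj⟩
  let equiv := LinearEquiv.ofBijective Γ.mulVecLin hbij
  let Γ' : Matrix (Fin m) (Fin m) ℝ := LinearMap.toMatrix' (equiv.symm : (Fin m → ℝ) →ₗ[ℝ] (Fin m → ℝ))
  have hΓ'Γ : Γ' * Γ = 1 := by
    have h1 : Matrix.toLin' Γ = Γ.mulVecLin := by
      apply LinearMap.ext; intro v
      simp [Matrix.toLin'_apply, Matrix.mulVecLin_apply]
    have h2 : Γ' * LinearMap.toMatrix' (Matrix.toLin' Γ) = LinearMap.toMatrix'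
        (((equiv.symm : (Fin m → ℝ) →ₗ[ℝ] (Fin m → ℝ))).comp (Matrix.toLin' Γ)) := by
      rw [LinearMap.toMatrix'_comp]
    have h3 : ((equiv.symm : (Fin m → ℝ) →ₗ[ℝ] (Fin m → ℝ))).comp (Matrix.toLin' Γ)
        = LinearMap.id := by
      apply LinearMap.ext; intro v
      rw [h1]
      exact equiv.symm_apply_apply v
    have h4 : LinearMap.toMatrix' (Matrix.toLin' Γ) = Γ := LinearMap.toMatrix'_toLin' _
    calc Γ' * Γ = Γ' * LinearMap.toMatrix' (Matrix.toLin' Γ) := by rw [h4]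
    _ = LinearMap.toMatrix' (((equiv.symm : (Fin m → ℝ) →ₗ[ℝ] (Fin m → ℝ))).comp (Matrix.toLin' Γ)) := h2
    _ = LinearMap.toMatrix' (LinearMap.id (R := ℝ) (M := Fin m → ℝ)) := by rw [h3]
    _ = 1 := LinearMap.toMatrix'_id
  refine ⟨fun a j => (Γ' * M) a j, fun a b => ?_⟩
  have : (Γ' * M) * Mᵀ = Γ' * Γ := by rw [hΓ, Matrix.mul_assoc]
  have h5 : ((Γ' * M) * Mᵀ) a b = if a = b then 1 else 0 := by
    rw [this, hΓ'Γ, Matrix.one_apply]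
  rw [← h5, Matrix.mul_apply]
  simp [dotProduct, Matrix.transpose_apply, hM]


open scoped Classical
variable {W : Type*} [Fintype W] [DecidableEq W]

/-- SAP-type property relative to a graph. -/
def Sap (B : Matrix W W ℝ) (H : SimpleGraph W) : Prop :=
  ∀ X : Matrix W W ℝ, Xᵀ = X → (∀ p q, H.Adj p q → X p q = 0) →
    (∀ p, X p p = 0) → B * X = 0 → X = 0


lemma ker_restrict (B : Matrix W W ℝ) (H : SimpleGraph W)
    (hadj : ∀ p q, p ≠ q → (B p q ≠ 0 ↔ H.Adj p q))
    (z : W) (x : W → ℝ) (hx : B *ᵥ x = 0) :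
    B *ᵥ (fun r => if H.Reachable z r then x r else 0) = 0 := by
  classical
  funext r
  by_cases hr : H.Reachable z r
  · have hterm : ∀ s, B r s * (if H.Reachable z s then x s else 0) = B r s * x s := by
      intro s
      by_cases hrs : H.Reachable z s
      · rw [if_pos hrs]
      · rcases eq_or_ne s r with rfl | hsr
        · exact absurd hr hrs
        · have hB : B r s = 0 := by
            by_contra hBne
            exact hrs (hr.trans ((hadj r s (Ne.symm hsr)).mp hBne).reachable)
          simp [hB]
    have heq : (B *ᵥ fun t => if H.Reachable z t then x t else 0) r = (B *ᵥ x) r := by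
      simp only [Matrix.mulVec, dotProduct]
      exact Finset.sum_congr rfl (fun s _ => hterm s)
    rw [heq, hx]
  · have hterm : ∀ s, B r s * (if H.Reachable z s then x s else 0) = 0 := by
      intro s
      by_cases hrs : H.Reachable z s
      · rcases eq_or_ne s r with rfl | hsr
        · exact absurd hrs hr
        · have hB : B r s = 0 := by
            by_contra hBne
            exact hr (hrs.trans ((hadj r s (Ne.symm hsr)).mp hBne).symm.reachable)
          simp [hB]
      · simp [if_neg hrs]
    simp only [Matrix.mulVec, dotProduct, Pi.zero_apply]
    exact Finset.sum_eq_zero (fun s _ => hterm s)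

lemma reach_of_ker (B : Matrix W W ℝ) (H : SimpleGraph W)
    (hadj : ∀ p q, p ≠ q → (B p q ≠ 0 ↔ H.Adj p q)) (hsap : Sap B H)
    {p q : W} {u v : W → ℝ} (hu : B *ᵥ u = 0) (hup : u p ≠ 0)
    (hv : B *ᵥ v = 0) (hvq : v q ≠ 0) : H.Reachable p q := by
  classical
  by_contra hnr
  set u' : W → ℝ := fun r => if H.Reachable p r then u r else 0 with hu'def
  set v' : W → ℝ := fun r => if H.Reachable q r then v r else 0 with hv'def
  have hBu' : B *ᵥ u' = 0 := ker_restrict B H hadj p u hu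
  have hBv' : B *ᵥ v' = 0 := ker_restrict B H hadj q v hv
  have hu'supp : ∀ r, u' r ≠ 0 → H.Reachable p r := by
    intro r h; by_contra hc; rw [hu'def] at h; simp [if_neg hc] at h
  have hv'supp : ∀ r, v' r ≠ 0 → H.Reachable q r := by
    intro r h; by_contra hc; rw [hv'def] at h; simp [if_neg hc] at h
  set X : Matrix W W ℝ := vecMulVec u' v' + vecMulVec v' u' with hXdef
  have hXsym : Xᵀ = X := by
    ext r c
    simp only [hXdef, Matrix.transpose_apply, Matrix.add_apply, vecMulVec_apply]
    ring
  have hXedge : ∀ a b, H.Adj a b → X a b = 0 := by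
    intro a b hab
    have h1 : u' a * v' b = 0 := by
      by_contra hc
      exact hnr ((hu'supp a (left_ne_zero_of_mul hc)).trans
        (hab.reachable.trans (hv'supp b (right_ne_zero_of_mul hc)).symm))
    have h2 : v' a * u' b = 0 := by
      by_contra hc
      exact hnr ((hu'supp b (right_ne_zero_of_mul hc)).trans
        (hab.symm.reachable.trans (hv'supp a (left_ne_zero_of_mul hc)).symm))
    simp [hXdef, vecMulVec_apply, h1, h2]
  have hXdiag : ∀ a, X a a = 0 := by
    intro a
    have h1 : u' a * v' a = 0 := by
      by_contra hc
      exact hnr ((hu'supp a (left_ne_zero_of_mul hc)).trans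
        (hv'supp a (right_ne_zero_of_mul hc)).symm)
    simp [hXdef, vecMulVec_apply, h1, mul_comm (v' a) (u' a)]
  have hBX : B * X = 0 := by
    rw [hXdef, Matrix.mul_add, mul_vecMulVec, mul_vecMulVec, hBu', hBv']
    ext r c; simp [vecMulVec_apply]
  have hX0 : X = 0 := hsap X hXsym hXedge hXdiag hBX
  have : X p q = 0 := by rw [hX0]; rfl
  rw [hXdef] at this
  simp only [Matrix.add_apply, vecMulVec_apply] at this
  have hv'p : v' p = 0 := by
    by_contra hc
    exact hnr (hv'supp p hc).symm
  have hu'p : u' p = u p := by rw [hu'def]; simp [if_pos (SimpleGraph.Reachable.refl p : H.Reachable p p)]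
  have hv'q : v' q = v q := by rw [hv'def]; simp [if_pos (SimpleGraph.Reachable.refl q : H.Reachable q q)]
  rw [hu'p, hv'q, hv'p] at this
  simp at this
  rcases this with h | h
  · exact hup h
  · exact hvq h


open scoped Classical
variable {W : Type*} [Fintype W] [DecidableEq W]



/-- The space of symmetric matrices annihilated by `B` on the left. -/
def symKer (B : Matrix W W ℝ) : Submodule ℝ (Matrix W W ℝ) where
  carrier := {X | Xᵀ = X ∧ B * X = 0}
  add_mem' := by
    rintro X Y ⟨h1, h2⟩ ⟨g1, g2⟩
    exact ⟨by rw [Matrix.transpose_add, h1, g1], by rw [Matrix.mul_add, h2, g2, add_zero]⟩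
  zero_mem' := ⟨by simp, by simp⟩
  smul_mem' := by
    rintro c X ⟨h1, h2⟩
    exact ⟨by rw [Matrix.transpose_smul, h1], by rw [Matrix.mul_smul, h2, smul_zero]⟩

lemma mem_symKer {B X : Matrix W W ℝ} : X ∈ symKer B ↔ Xᵀ = X ∧ B * X = 0 := Iff.rfl

lemma dot_vecMulVec_dot (u v x y : W → ℝ) :
    x ⬝ᵥ ((vecMulVec u v) *ᵥ y) = (x ⬝ᵥ u) * (v ⬝ᵥ y) := by
  simp only [dotProduct, Matrix.mulVec, vecMulVec_apply, Finset.sum_mul,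
    Finset.mul_sum]
  rw [Finset.sum_comm]
  apply Finset.sum_congr rfl; intro j _
  apply Finset.sum_congr rfl; intro i _
  ring

/-- lower bound on the dimension of `symKer B`. -/
lemma card_le_finrank_symKer (B : Matrix W W ℝ) :
    Fintype.card (Sym2 (Fin (finrank ℝ (LinearMap.ker B.mulVecLin))))
      ≤ finrank ℝ (symKer B) := by
  classical
  set ℓ := finrank ℝ (LinearMap.ker B.mulVecLin) with hℓ
  set bb := Module.finBasis ℝ (LinearMap.ker B.mulVecLin) with hbb
  set w : Fin ℓ → (W → ℝ) := fun a => ((bb a : LinearMap.ker B.mulVecLin) : W → ℝ) with hwdef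
  have hw : LinearIndependent ℝ w := by
    have := bb.linearIndependent
    exact this.map' (Submodule.subtype _) (Submodule.ker_subtype _)
  have hwker : ∀ a, B *ᵥ w a = 0 := by
    intro a
    have := (bb a).2
    rwa [LinearMap.mem_ker, Matrix.mulVecLin_apply] at this
  obtain ⟨d, hd⟩ := exists_dual w hw
  set famM : Sym2 (Fin ℓ) → Matrix W W ℝ :=
    Sym2.lift ⟨fun a b => vecMulVec (w a) (w b) + vecMulVec (w b) (w a),
      fun a b => add_comm _ _⟩ with hfamdef
  have hmem : ∀ s, famM s ∈ symKer B := by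
    intro s
    induction s using Sym2.inductionOn with
    | _ a b =>
      constructor
      · rw [hfamdef, Sym2.lift_mk]
        ext r c
        simp only [Matrix.transpose_apply, Matrix.add_apply, vecMulVec_apply]
        ring
      · rw [hfamdef, Sym2.lift_mk]
        simp only [Matrix.mul_add, mul_vecMulVec, hwker]
        ext r c
        simp [vecMulVec_apply]
  -- linear independence
  have hindep : LinearIndependent ℝ famM := by
    rw [Fintype.linearIndependent_iff]
    intro c hc
    have key : ∀ a b : Fin ℓ, c s(a, b) = 0 := by
      intro a b
      set Ψ : Matrix W W ℝ →ₗ[ℝ] ℝ :=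
        { toFun := fun M => d a ⬝ᵥ (M *ᵥ d b)
          map_add' := by intro M N; simp [Matrix.add_mulVec, dotProduct_add]
          map_smul' := by intro t M; simp [Matrix.smul_mulVec, dotProduct_smul] }
        with hΨdef
      have hΨfam : ∀ x y : Fin ℓ, Ψ (famM s(x, y)) =
          (if a = x then (1:ℝ) else 0) * (if b = y then 1 else 0)
          + (if a = y then (1:ℝ) else 0) * (if b = x then 1 else 0) := by
        intro x y
        rw [hfamdef, Sym2.lift_mk]
        have e1 : Ψ (vecMulVec (w x) (w y) + vecMulVec (w y) (w x))
            = d a ⬝ᵥ ((vecMulVec (w x) (w y)) *ᵥ d b)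
              + d a ⬝ᵥ ((vecMulVec (w y) (w x)) *ᵥ d b) := by
          simp [hΨdef, Matrix.add_mulVec, dotProduct_add]
        rw [e1, dot_vecMulVec_dot, dot_vecMulVec_dot]
        rw [hd a x, hd a y]
        have c1 : w y ⬝ᵥ d b = if b = y then 1 else 0 := by
          rw [dotProduct_comm]; exact hd b y
        have c2 : w x ⬝ᵥ d b = if b = x then 1 else 0 := by
          rw [dotProduct_comm]; exact hd b x
        rw [c1, c2]
      have hsum : ∑ s : Sym2 (Fin ℓ), c s * Ψ (famM s) = 0 := by
        have := congrArg Ψ hc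
        rw [map_sum] at this
        simpa [_root_.map_smul, smul_eq_mul] using this
      have hterm : ∀ s : Sym2 (Fin ℓ), s ≠ s(a, b) → c s * Ψ (famM s) = 0 := by
        intro s hs
        induction s using Sym2.inductionOn with
        | _ x y =>
          have h1 : ¬(a = x ∧ b = y) := by
            intro ⟨h1, h2⟩; exact hs (by rw [h1, h2])
          have h2 : ¬(a = y ∧ b = x) := by
            intro ⟨h1, h2⟩; exact hs (by rw [h1, h2, Sym2.eq_swap])
          have e1 : (if a = x then (1:ℝ) else 0) * (if b = y then 1 else 0) = 0 := by
            by_cases hax : a = x <;> by_cases hby : b = y <;> simp [hax, hby]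
            exact absurd ⟨hax, hby⟩ h1
          have e2 : (if a = y then (1:ℝ) else 0) * (if b = x then 1 else 0) = 0 := by
            by_cases hay : a = y <;> by_cases hbx : b = x <;> simp [hay, hbx]
            exact absurd ⟨hay, hbx⟩ h2
          have : Ψ (famM s(x, y)) = 0 := by rw [hΨfam x y, e1, e2, add_zero]
          rw [this, mul_zero]
      have hone : Ψ (famM s(a, b)) = if a = b then 2 else 1 := by
        rw [hΨfam a b]
        rcases Classical.em (a = b) with h | h
        · simp [h]; norm_num
        · simp [h, Ne.symm h]
      have := Finset.sum_eq_single (s(a, b)) (fun s _ hs => hterm s hs)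
        (fun hs => absurd (Finset.mem_univ _) hs)
        (f := fun s => c s * Ψ (famM s))
      rw [this] at hsum
      have hsum2 : c s(a, b) * Ψ (famM s(a, b)) = 0 := hsum
      rw [hone] at hsum2
      rcases Classical.em (a = b) with h | h
      · rw [if_pos h] at hsum2; linarith
      · rw [if_neg h] at hsum2; linarith
    intro s
    induction s using Sym2.inductionOn with
    | _ a b => exact key a b
  have hindep' : LinearIndependent ℝ (fun s => (⟨famM s, hmem s⟩ : symKer B)) := by
    apply LinearIndependent.of_comp (symKer B).subtype
    convert hindep
    rfl
  exact hindep'.fintype_card_le_finrank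


open scoped Classical
variable {W : Type*} [Fintype W] [DecidableEq W]






theorem sap_count (B : Matrix W W ℝ) (H : SimpleGraph W)
    (hsym : Bᵀ = B) (hadj : ∀ p q : W, p ≠ q → (B p q ≠ 0 ↔ H.Adj p q)) (hsap : Sap B H) :
    Fintype.card (Sym2 (Fin (finrank ℝ (LinearMap.ker B.mulVecLin))))
      ≤ H.edgeSet.ncard + 1 := by
  classical
  have symm_apply : ∀ (Y : Matrix W W ℝ), Yᵀ = Y → ∀ a b, Y b a = Y a b := by
    intro Y h a b
    have := congrFun (congrFun h a) b
    rwa [Matrix.transpose_apply] at this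
  have hBs : ∀ a b, B b a = B a b := symm_apply B hsym
  -- the kernel support
  set KS : Set W := {p | ∃ u, B *ᵥ u = 0 ∧ u p ≠ 0} with hKSdef
  set Z : Finset W := Finset.univ.filter (fun p => B p p = 0 ∧ p ∈ KS) with hZdef
  have hEfinite : H.edgeSet.Finite := Set.toFinite _
  set Efin : Finset (Sym2 W) := hEfinite.toFinset with hEdef
  have hmemE : ∀ a b : W, s(a, b) ∈ Efin ↔ H.Adj a b := by
    intro a b
    rw [hEdef, Set.Finite.mem_toFinset, SimpleGraph.mem_edgeSet]
  -- the relation matrix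
  set R : Matrix {e // e ∈ Efin} {p // p ∈ Z} ℝ := fun e p =>
    Sym2.lift ⟨fun a b => (if a = ↑p then B a b else 0) + (if b = ↑p then B b a else 0),
      fun a b => add_comm _ _⟩ e.val with hRdef
  -- edge evaluation linear map
  set θe : Matrix W W ℝ →ₗ[ℝ] ({e // e ∈ Efin} → ℝ) :=
    { toFun := fun X e =>
        Sym2.lift ⟨fun a b => (X a b + X b a) / 2, fun a b => by ring⟩ e.val
      map_add' := by
        intro X Y; funext e
        rcases e with ⟨e, he⟩
        induction e using Sym2.inductionOn with
        | _ a b => simp [Matrix.add_apply]; ring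
      map_smul' := by
        intro t X; funext e
        rcases e with ⟨e, he⟩
        induction e using Sym2.inductionOn with
        | _ a b => simp [Matrix.smul_apply]; ring } with hθedef
  set θd : Matrix W W ℝ →ₗ[ℝ] ({p // p ∈ Z} → ℝ) :=
    { toFun := fun X p => X ↑p ↑p
      map_add' := by intro X Y; funext p; simp
      map_smul' := by intro t X; funext p; simp } with hθddef
  have hθeval : ∀ (X : Matrix W W ℝ), Xᵀ = X → ∀ (a b : W) (h : s(a, b) ∈ Efin),
      θe X ⟨s(a, b), h⟩ = X a b := by
    intro X hX a b h
    have hXs : X b a = X a b := symm_apply X hX a b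
    simp only [hθedef, LinearMap.coe_mk, AddHom.coe_mk, Sym2.lift_mk]
    rw [hXs]; ring
  -- diagonal vanishing off Z
  have hdiag0 : ∀ X ∈ symKer B, (∀ e : {e // e ∈ Efin}, θe X e = 0) →
      ∀ p, p ∉ Z → X p p = 0 := by
    intro X hXmem hedge p hp
    obtain ⟨hXsym, hBX⟩ := hXmem
    have hXs : ∀ a b, X b a = X a b := fun a b => symm_apply X hXsym a b
    have hXedge : ∀ a b, H.Adj a b → X a b = 0 := by
      intro a b hab
      have h := hedge ⟨s(a, b), (hmemE a b).mpr hab⟩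
      rw [hθeval X hXsym a b ((hmemE a b).mpr hab)] at h
      exact h
    rw [hZdef] at hp
    simp only [Finset.mem_filter, Finset.mem_univ, true_and, not_and] at hp
    by_cases hBpp : B p p = 0
    · -- then p ∉ KS
      have hpKS : p ∉ KS := hp hBpp
      have hcol : B *ᵥ (fun r => X r p) = 0 := by
        funext r
        have := congrFun (congrFun hBX r) p
        simpa [Matrix.mul_apply, Matrix.mulVec, dotProduct] using this
      by_contra hXpp
      exact hpKS ⟨fun r => X r p, hcol, hXpp⟩
    · -- B p p ≠ 0 : use row p of B*X
      have h0 : (B * X) p p = 0 := by rw [hBX]; rfl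
      rw [Matrix.mul_apply] at h0
      have hterm : ∀ s ∈ (Finset.univ : Finset W), s ≠ p → B p s * X s p = 0 := by
        intro s _ hs
        by_cases hBps : B p s = 0
        · rw [hBps, zero_mul]
        · have hadjps : H.Adj p s := (hadj p s (Ne.symm hs)).mp hBps
          rw [hXs p s, hXedge p s hadjps, mul_zero]
      rw [Finset.sum_eq_single p hterm (fun h => absurd (Finset.mem_univ p) h)] at h0
      exact (mul_eq_zero.mp h0).resolve_left hBpp
  -- image of θe lies in the annihilator
  set Ann : Submodule ℝ ({e // e ∈ Efin} → ℝ) := LinearMap.ker (Rᵀ.mulVecLin) with hAnndef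
  have hAnnmem : ∀ X ∈ symKer B, θe X ∈ Ann := by
    intro X hXmem
    obtain ⟨hXsym, hBX⟩ := hXmem
    have hXs : ∀ a b, X b a = X a b := fun a b => symm_apply X hXsym a b
    rw [hAnndef, LinearMap.mem_ker]
    funext p
    rcases p with ⟨p, hpZ⟩
    have hBpp : B p p = 0 := (Finset.mem_filter.mp hpZ).2.1
    have e0 : Rᵀ.mulVecLin (θe X) ⟨p, hpZ⟩
        = ∑ e : {e // e ∈ Efin}, R e ⟨p, hpZ⟩ * θe X e := by
      simp only [Matrix.mulVecLin_apply, Matrix.mulVec, dotProduct,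
        Matrix.transpose_apply]
    rw [e0]
    -- convert to a sum over all of Sym2 W
    set F : Sym2 W → ℝ := fun e =>
      (Sym2.lift ⟨fun a b => (if a = p then B a b else 0) + (if b = p then B b a else 0),
        fun a b => add_comm _ _⟩ e) *
      (Sym2.lift ⟨fun a b => (X a b + X b a) / 2, fun a b => by ring⟩ e) with hFdef
    have e1 : ∀ e : {e // e ∈ Efin}, R e ⟨p, hpZ⟩ * θe X e = F e.val := by
      intro e; rfl
    rw [Finset.sum_congr rfl (fun e _ => e1 e)]
    have e2 : ∑ e : {e // e ∈ Efin}, F e.val = ∑ e ∈ Efin, F e :=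
      Finset.sum_coe_sort Efin F
    rw [e2]
    have e3 : ∑ e ∈ Efin, F e = ∑ e : Sym2 W, F e := by
      apply Finset.sum_subset (Finset.subset_univ Efin)
      intro e _ heE
      induction e using Sym2.inductionOn with
      | _ a b =>
        have hnadj : ¬ H.Adj a b := fun h => heE ((hmemE a b).mpr h)
        have hz : (if a = p then B a b else 0) + (if b = p then B b a else 0) = 0 := by
          by_cases hap : a = p
          · by_cases hbp : b = p
            · subst hap; subst hbp; simp [hBpp]
            · subst hap
              have : B a b = 0 := by
                by_contra hc
                exact hnadj ((hadj a b (fun h => hbp h.symm)).mp hc)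
              simp [this, hbp]
          · by_cases hbp : b = p
            · subst hbp
              have : B b a = 0 := by
                by_contra hc
                exact hnadj (((hadj b a (fun h => hap h.symm)).mp hc)).symm
              simp [this, hap]
            · simp [hap, hbp]
        rw [hFdef]
        simp only [Sym2.lift_mk]
        rw [hz, zero_mul]
    rw [e3]
    -- now use sym2_sum
    set g : W → W → ℝ := fun a b => (if a = p then B a b else 0) * ((X a b + X b a) / 2)
      with hgdef
    have e4 : ∀ e : Sym2 W, F e =
        Sym2.lift ⟨fun a b => g a b + g b a, fun a b => by ring⟩ e := by
      intro e
      induction e using Sym2.inductionOn with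
      | _ a b =>
        simp only [hFdef, hgdef, Sym2.lift_mk]
        ring
    rw [Finset.sum_congr rfl (fun e _ => e4 e)]
    have hgd : ∀ a, g a a = 0 := by
      intro a
      by_cases hap : a = p
      · subst hap; simp [hgdef, hBpp]
      · simp [hgdef, hap]
    rw [sym2_sum g hgd]
    have e5 : ∀ a, ∑ b, g a b = if a = p then ∑ b, B a b * ((X a b + X b a)/2) else 0 := by
      intro a
      by_cases hap : a = p
      · subst hap; simp [hgdef]
      · simp [hgdef, hap]
    rw [Finset.sum_congr rfl (fun a _ => e5 a), Finset.sum_ite_eq' Finset.univ p]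
    simp only [Finset.mem_univ, if_true]
    have e6 : ∀ b, B p b * ((X p b + X b p)/2) = B p b * X b p := by
      intro b; rw [hXs p b]; ring
    rw [Finset.sum_congr rfl (fun b _ => e6 b)]
    have hfin := congrFun (congrFun hBX p) p
    rw [Matrix.mul_apply] at hfin
    rw [hfin]
    simp
  -- the injective map Θ
  set θe' : symKer B →ₗ[ℝ] ({e // e ∈ Efin} → ℝ) := θe.comp (symKer B).subtype with hθe'def
  have hrange : ∀ X : symKer B, θe' X ∈ Ann := fun X => hAnnmem X.val X.2
  set Θ : symKer B →ₗ[ℝ] Ann × ({p // p ∈ Z} → ℝ) :=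
    LinearMap.prod (θe'.codRestrict Ann hrange) (θd.comp (symKer B).subtype) with hΘdef
  have hΘinj : Function.Injective Θ := by
    rw [← LinearMap.ker_eq_bot, LinearMap.ker_eq_bot']
    intro X hX
    have h1 : θe X.val = 0 := by
      have h1a := congrArg Prod.fst hX
      have h1b := congrArg Subtype.val h1a
      simpa [hΘdef, hθe'def] using h1b
    have h2 : θd X.val = 0 := by
      have h2a := congrArg Prod.snd hX
      simpa [hΘdef] using h2a
    apply Subtype.ext
    show X.val = 0
    apply hsap X.val X.2.1 ?_ ?_ X.2.2
    · intro p q hpq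
      have he : s(p, q) ∈ Efin := (hmemE p q).mpr hpq
      have := congrFun h1 ⟨s(p, q), he⟩
      rw [hθeval X.val X.2.1 p q he] at this
      exact this
    · intro p
      by_cases hp : p ∈ Z
      · exact congrFun h2 ⟨p, hp⟩
      · exact hdiag0 X.val X.2 (fun e => congrFun h1 e) p hp
  -- kernel of the relation map has dimension at most 1
  have c8 : finrank ℝ (LinearMap.ker R.mulVecLin) ≤ 1 := by
    by_cases hZe : Z = ∅
    · have hfle : finrank ℝ (LinearMap.ker R.mulVecLin) ≤ finrank ℝ ({p // p ∈ Z} → ℝ) :=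
        Submodule.finrank_le _
      rw [Module.finrank_pi, Fintype.card_coe] at hfle
      have hZc : Z.card = 0 := by rw [hZe]; rfl
      omega
    · obtain ⟨p0, hp0⟩ := Finset.nonempty_iff_ne_empty.mpr hZe
      set φ0 : LinearMap.ker R.mulVecLin →ₗ[ℝ] ℝ :=
        (LinearMap.proj (⟨p0, hp0⟩ : {p // p ∈ Z})).comp
          (LinearMap.ker R.mulVecLin).subtype with hφ0def
      have hφinj : Function.Injective φ0 := by
        rw [← LinearMap.ker_eq_bot, LinearMap.ker_eq_bot']
        intro lam hlam
        have hlam0 : lam.val ⟨p0, hp0⟩ = 0 := hlam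
        set μ : W → ℝ := fun x => if hx : x ∈ Z then lam.val ⟨x, hx⟩ else 0 with hμdef
        have hμval : ∀ (p : {p // p ∈ Z}), lam.val p = μ ↑p := by
          rintro ⟨x, hx⟩
          rw [hμdef]
          simp [dif_pos hx]
        have hμnotZ : ∀ x, x ∉ Z → μ x = 0 := by
          intro x hx; rw [hμdef]; simp [dif_neg hx]
        have hedgeμ : ∀ a b, H.Adj a b → μ a + μ b = 0 := by
          intro a b hab
          have he : s(a, b) ∈ Efin := (hmemE a b).mpr hab
          have hl : R.mulVecLin lam.val = 0 := lam.2
          have h0 := congrFun hl ⟨s(a, b), he⟩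
          have hexp : (R.mulVecLin lam.val) ⟨s(a, b), he⟩
              = ∑ p : {p // p ∈ Z},
                (((if a = ↑p then B a b else 0) + (if b = ↑p then B b a else 0)) * μ ↑p) := by
            simp only [Matrix.mulVecLin_apply, Matrix.mulVec, dotProduct]
            apply Finset.sum_congr rfl
            intro p _
            rw [hμval p]
            congr 1
          rw [hexp] at h0
          have hsplit : ∑ p : {p // p ∈ Z},
              (((if a = ↑p then B a b else 0) + (if b = ↑p then B b a else 0)) * μ ↑p)
              = (∑ p : {p // p ∈ Z}, (if a = ↑p then B a b * μ ↑p else 0))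
                + (∑ p : {p // p ∈ Z}, (if b = ↑p then B b a * μ ↑p else 0)) := by
            rw [← Finset.sum_add_distrib]
            apply Finset.sum_congr rfl
            intro p _
            by_cases h1' : a = ↑p <;> by_cases h2' : b = ↑p <;> simp [h1', h2'] <;> ring
          rw [hsplit] at h0
          have hs1 : ∑ p : {p // p ∈ Z}, (if a = ↑p then B a b * μ ↑p else 0)
              = B a b * μ a := by
            rw [Finset.sum_coe_sort Z (fun x => if a = x then B a b * μ x else 0),
              Finset.sum_ite_eq Z a]
            by_cases haZ : a ∈ Z
            · rw [if_pos haZ]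
            · rw [if_neg haZ, hμnotZ a haZ, mul_zero]
          have hs2 : ∑ p : {p // p ∈ Z}, (if b = ↑p then B b a * μ ↑p else 0)
              = B b a * μ b := by
            rw [Finset.sum_coe_sort Z (fun x => if b = x then B b a * μ x else 0),
              Finset.sum_ite_eq Z b]
            by_cases hbZ : b ∈ Z
            · rw [if_pos hbZ]
            · rw [if_neg hbZ, hμnotZ b hbZ, mul_zero]
          rw [hs1, hs2, hBs a b] at h0
          have h0' : B a b * μ a + B a b * μ b = 0 := by simpa using h0
          have hfact : B a b * (μ a + μ b) = 0 := by rw [mul_add]; exact h0'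
          have hBab : B a b ≠ 0 := (hadj a b hab.ne).mpr hab
          exact (mul_eq_zero.mp hfact).resolve_left hBab
        have hwalk : ∀ (x y : W), H.Walk x y → μ x = 0 → μ y = 0 := by
          intro x y wlk
          induction wlk with
          | nil => exact fun h => h
          | @cons u v w' hadj' p ih =>
            intro h0
            apply ih
            have := hedgeμ u v hadj'
            linarith
        have hμp0 : μ p0 = 0 := by
          rw [hμdef]; simpa [dif_pos hp0] using hlam0
        have hμ0 : ∀ x, μ x = 0 := by
          intro x
          by_contra hx0
          have hxZ : x ∈ Z := by
            by_contra hxZ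
            exact hx0 (hμnotZ x hxZ)
          have hxf := Finset.mem_filter.mp hxZ
          have hp0f := Finset.mem_filter.mp hp0
          obtain ⟨u, hu, hup⟩ := hp0f.2.2
          obtain ⟨v, hv, hvx⟩ := hxf.2.2
          have hreach : H.Reachable p0 x := reach_of_ker B H hadj hsap hu hup hv hvx
          obtain ⟨wlk⟩ := hreach
          exact hx0 (hwalk p0 x wlk hμp0)
        apply Subtype.ext
        funext p
        rw [hμval p, hμ0]
        simp
      calc finrank ℝ (LinearMap.ker R.mulVecLin) ≤ finrank ℝ ℝ :=
            LinearMap.finrank_le_finrank_of_injective hφinj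
        _ = 1 := Module.finrank_self ℝ
  -- dimension bookkeeping
  have c1 : Fintype.card (Sym2 (Fin (finrank ℝ (LinearMap.ker B.mulVecLin))))
      ≤ finrank ℝ (symKer B) := card_le_finrank_symKer B
  have c2 : finrank ℝ (symKer B) ≤ finrank ℝ (Ann × ({p // p ∈ Z} → ℝ)) :=
    LinearMap.finrank_le_finrank_of_injective hΘinj
  have c3 : finrank ℝ (Ann × ({p // p ∈ Z} → ℝ))
      = finrank ℝ Ann + finrank ℝ ({p // p ∈ Z} → ℝ) := Module.finrank_prod
  have c4 : finrank ℝ ({p // p ∈ Z} → ℝ) = Z.card := by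
    rw [Module.finrank_pi]; exact Fintype.card_coe Z
  have c5 : finrank ℝ (LinearMap.range Rᵀ.mulVecLin) + finrank ℝ Ann = Efin.card := by
    rw [hAnndef, LinearMap.finrank_range_add_finrank_ker, Module.finrank_pi]
    exact Fintype.card_coe _
  have c6 : finrank ℝ (LinearMap.range Rᵀ.mulVecLin)
      = finrank ℝ (LinearMap.range R.mulVecLin) := Matrix.rank_transpose R
  have c7 : finrank ℝ (LinearMap.range R.mulVecLin)
      + finrank ℝ (LinearMap.ker R.mulVecLin) = Z.card := by
    rw [LinearMap.finrank_range_add_finrank_ker, Module.finrank_pi]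
    exact Fintype.card_coe _
  have c9 : Efin.card = H.edgeSet.ncard := by
    rw [Set.ncard_eq_toFinset_card _ hEfinite]
  omega


end SnipAux

theorem stmt15 (G : SimpleGraph V) (i : V) (k ℓ : ℕ) (hkl : k < ℓ)
    (h : ∃ A : Matrix V V ℝ, InS G A ∧ HasSNIP A i ∧
      nullity A = k ∧ nullity (delRC A i) = ℓ) :
    (ℓ + 1) * ℓ / 2 ≤ (G.comap (Subtype.val : {x // x ≠ i} → V)).edgeSet.ncard + 1 := by
  classical
  obtain ⟨A, ⟨hAsymm, hAadj⟩, hsnip, hk, hℓeq⟩ := h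
  set B := delRC A i with hBdef
  set G' := G.comap (Subtype.val : {x // x ≠ i} → V) with hG'def
  have hAs : ∀ a b, A b a = A a b := by
    intro a b
    have := congrFun (congrFun hAsymm a) b
    rwa [Matrix.transpose_apply] at this
  have hBsym : Bᵀ = B := by
    ext p q
    rw [Matrix.transpose_apply]
    exact hAs ↑p ↑q
  have hadjB : ∀ p q : {x // x ≠ i}, p ≠ q → (B p q ≠ 0 ↔ G'.Adj p q) := by
    intro p q hpq
    have hval : (↑p : V) ≠ ↑q := fun hc => hpq (Subtype.ext hc)
    exact hAadj ↑p ↑q hval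
  have hsap : SnipAux.Sap B G' := by
    intro X' hX'sym hX'edge hX'diag hBX'
    have hX'symm : ∀ a b, X' b a = X' a b := by
      intro a b
      have := congrFun (congrFun hX'sym a) b
      rwa [Matrix.transpose_apply] at this
    set X : Matrix V V ℝ := fun j k =>
      if hj : j = i then 0 else if hk : k = i then 0 else X' ⟨j, hj⟩ ⟨k, hk⟩ with hXdef
    have hX0 : X = 0 := by
      apply hsnip X
      · show Xᵀ = X
        ext j k
        rw [Matrix.transpose_apply]
        by_cases hj : j = i
        · by_cases hk : k = i <;> simp [hXdef, hj, hk]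
        · by_cases hk : k = i
          · simp [hXdef, hj, hk]
          · simp [hXdef, hj, hk, hX'symm ⟨j, hj⟩ ⟨k, hk⟩]
      · intro j k
        by_cases hj : j = i
        · simp [hXdef, hj]
        · by_cases hk : k = i
          · simp [hXdef, hj, hk]
          · by_cases hjk : j = k
            · subst hjk
              simp [hXdef, hj, hX'diag ⟨j, hj⟩]
            · by_cases hAdj : G.Adj j k
              · have hz : X' ⟨j, hj⟩ ⟨k, hk⟩ = 0 := hX'edge ⟨j, hj⟩ ⟨k, hk⟩ hAdj
                simp [hXdef, hj, hk, hz]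
              · have hz : A j k = 0 := by
                  by_contra hc
                  exact hAdj ((hAadj j k hjk).mp hc)
                simp [hz]
      · intro j
        by_cases hj : j = i
        · simp [hXdef, hj]
        · simp [hXdef, hj, hX'diag ⟨j, hj⟩]
      · intro j k hji
        rw [Matrix.mul_apply]
        by_cases hk : k = i
        · apply Finset.sum_eq_zero
          intro m _
          have hz : X m k = 0 := by
            by_cases hm : m = i <;> simp [hXdef, hm, hk]
          rw [hz, mul_zero]
        · have hstep : ∀ m, A j m * X m k
              = if hm : m = i then 0 else A j m * X' ⟨m, hm⟩ ⟨k, hk⟩ := by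
            intro m
            by_cases hm : m = i
            · simp [hXdef, hm]
            · simp [hXdef, hm, hk]
          rw [Finset.sum_congr rfl (fun m _ => hstep m)]
          rw [← Finset.sum_erase_add _ _ (Finset.mem_univ i)]
          rw [dif_pos rfl, add_zero]
          have hsub : ∑ m ∈ Finset.univ.erase i,
              (if hm : m = i then 0 else A j m * X' ⟨m, hm⟩ ⟨k, hk⟩)
              = ∑ m : {x // x ≠ i},
                (if hm : (↑m : V) = i then 0 else A j ↑m * X' ⟨↑m, hm⟩ ⟨k, hk⟩) := by
            apply Finset.sum_subtype
            intro x
            simp [Finset.mem_erase]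
          rw [hsub]
          have hfin : ∀ m : {x // x ≠ i},
              (if hm : (↑m : V) = i then 0 else A j ↑m * X' ⟨↑m, hm⟩ ⟨k, hk⟩)
              = B ⟨j, hji⟩ m * X' m ⟨k, hk⟩ := by
            intro m
            rw [dif_neg m.2]
            congr 1
          rw [Finset.sum_congr rfl (fun m _ => hfin m)]
          have := congrFun (congrFun hBX' ⟨j, hji⟩) ⟨k, hk⟩
          rw [Matrix.mul_apply] at this
          rw [this]
          simp
    funext p q
    have hpq := congrFun (congrFun hX0 ↑p) ↑q
    rw [hXdef] at hpq
    simp only [dif_neg p.2, dif_neg q.2] at hpq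
    simpa using hpq
  have hcount := SnipAux.sap_count B G' hBsym hadjB hsap
  have hℓ' : Module.finrank ℝ (LinearMap.ker B.mulVecLin) = ℓ := hℓeq
  rw [hℓ', Sym2.card] at hcount
  simpa [Fintype.card_fin, Nat.choose_two_right] using hcount
end

section
/- Let (G,i) be a rooted graph on n vertices and let Ḡ be the complement graph of G. Then, as real numbers, ξξ(G,i) + ξξ(Ḡ,i) ≤ 2√2·n. -/
set_option maxHeartbeats 1000000
set_option linter.unusedSectionVars false
set_option linter.unusedVariables false

open Matrix

variable {V : Type*} [Fintype V] [DecidableEq V]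

noncomputable def extz (i : V) : ({j : V // j ≠ i} → ℝ) →ₗ[ℝ] (V → ℝ) where
  toFun v j := if h : j = i then 0 else v ⟨j, h⟩
  map_add' x y := by funext j; by_cases h : j = i <;> simp [h]
  map_smul' c x := by funext j; by_cases h : j = i <;> simp [h]

lemma extz_apply_ne (i : V) (v : {j : V // j ≠ i} → ℝ) (j : {j : V // j ≠ i}) :
    extz i v j.val = v j := by
  simp [extz, j.prop]

lemma extz_apply_i (i : V) (v : {j : V // j ≠ i} → ℝ) : extz i v i = 0 := by
  simp [extz]

lemma extz_inj (i : V) : Function.Injective (extz i) := by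
  intro x y h
  funext j
  have := congrFun h j.val
  rwa [extz_apply_ne, extz_apply_ne] at this


/-- The linear map extracting entry `(j,k)` of a matrix. -/
def entryLM (j k : V) : Matrix V V ℝ →ₗ[ℝ] ℝ where
  toFun M := M j k
  map_add' M N := rfl
  map_smul' c M := rfl

@[simp] lemma entryLM_apply (j k : V) (M : Matrix V V ℝ) : entryLM j k M = M j k := rfl

lemma key_bound (G : SimpleGraph V) (i : V) (A : Matrix V V ℝ)
    (hS : InS G A) (hSNIP : HasSNIP A i) :
    nullity (delRC A i) * (nullity (delRC A i) + 1) ≤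
      2 * Fintype.card {j : V // j ≠ i} +
      2 * (G.comap (Subtype.val : {j : V // j ≠ i} → V)).edgeSet.ncard := by
  classical
  set V' := {j : V // j ≠ i}
  set G' := G.comap (Subtype.val : V' → V) with hG'
  letI : Fintype G'.edgeSet := (Set.toFinite _).fintype
  set K := LinearMap.ker (delRC A i).mulVecLin with hK
  have hnl : nullity (delRC A i) = Module.finrank ℝ K := rfl
  set L := Module.finrank ℝ K with hL
  let b : Module.Basis (Fin L) ℝ K := Module.finBasis ℝ K
  let u : Fin L → (V → ℝ) := fun a => extz i ((b a : V' → ℝ))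
  let U : Matrix (Fin L) V ℝ := Matrix.of fun a j => u a j
  have hUi : ∀ a, U a i = 0 := fun a => extz_apply_i i _
  -- rows of A·Uᵀ vanish off i
  have hrow : ∀ (j : V), j ≠ i → ∀ (w : K), (∑ m, A j m * extz i (w : V' → ℝ) m) = 0 := by
    intro j hj w
    have h0 : (∑ m, A j m * extz i (w : V' → ℝ) m)
        = ∑ m ∈ Finset.univ.erase i, A j m * extz i (w : V' → ℝ) m := by
      rw [← Finset.sum_erase_add _ _ (Finset.mem_univ i), extz_apply_i]
      ring
    rw [h0, Finset.sum_subtype (p := fun m => m ≠ i) (Finset.univ.erase i) (by simp)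
      (fun m => A j m * extz i (w : V' → ℝ) m)]
    have hker : (delRC A i).mulVec (w : V' → ℝ) = 0 := w.2
    have := congrFun hker ⟨j, hj⟩
    simp only [Matrix.mulVec, dotProduct, Pi.zero_apply] at this
    rw [← this]
    apply Finset.sum_congr rfl
    intro m _
    rw [extz_apply_ne]
    rfl
  let Cmat : (Sym2 (Fin L) → ℝ) → Matrix (Fin L) (Fin L) ℝ :=
    fun f => Matrix.of fun a c => f s(a, c)
  let Xmat : (Sym2 (Fin L) → ℝ) → Matrix V V ℝ := fun f => Uᵀ * Cmat f * U
  have hCsymm : ∀ f, (Cmat f)ᵀ = Cmat f := by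
    intro f; ext a c; simp [Cmat, Sym2.eq_swap]
  have hXsymm : ∀ f, (Xmat f)ᵀ = Xmat f := by
    intro f
    show (Uᵀ * Cmat f * U)ᵀ = _
    rw [Matrix.transpose_mul, Matrix.transpose_mul, Matrix.transpose_transpose,
      hCsymm, ← Matrix.mul_assoc]
  have hXsymm' : ∀ f p q, Xmat f p q = Xmat f q p := by
    intro f p q
    conv_lhs => rw [← hXsymm f]
    rw [Matrix.transpose_apply]
  have hXcoli : ∀ f p, Xmat f p i = 0 := by
    intro f p
    show (Uᵀ * Cmat f * U) p i = 0
    rw [Matrix.mul_apply]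
    simp [hUi]
  have hXrowi : ∀ f q, Xmat f i q = 0 := fun f q => (hXsymm' f i q).trans (hXcoli f q)
  have hCadd : ∀ f g, Cmat (f + g) = Cmat f + Cmat g := by
    intro f g; ext a c; simp [Cmat]
  have hCsmul : ∀ (c : ℝ) f, Cmat (c • f) = c • Cmat f := by
    intro c f; ext a e; simp [Cmat]
  have hXadd : ∀ f g, Xmat (f + g) = Xmat f + Xmat g := by
    intro f g
    show Uᵀ * Cmat (f + g) * U = Uᵀ * Cmat f * U + Uᵀ * Cmat g * U
    rw [hCadd, Matrix.mul_add, Matrix.add_mul]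
  have hXsmul : ∀ (c : ℝ) f, Xmat (c • f) = c • Xmat f := by
    intro c f
    show Uᵀ * Cmat (c • f) * U = c • (Uᵀ * Cmat f * U)
    rw [hCsmul, Matrix.mul_smul, Matrix.smul_mul]
  let XL : (Sym2 (Fin L) → ℝ) →ₗ[ℝ] Matrix V V ℝ :=
    { toFun := Xmat, map_add' := hXadd, map_smul' := hXsmul }
  have hXL : ∀ f, XL f = Xmat f := fun _ => rfl
  set P₁ : Matrix V V ℝ →ₗ[ℝ] (V' → ℝ) :=
    LinearMap.pi (fun j : V' => entryLM j.val j.val) with hP₁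
  set P₂ : Matrix V V ℝ →ₗ[ℝ] (G'.edgeSet → ℝ) :=
    LinearMap.pi (fun e : G'.edgeSet =>
      entryLM (Quot.out e.val).1.val (Quot.out e.val).2.val) with hP₂
  set Θ : (Sym2 (Fin L) → ℝ) →ₗ[ℝ] ((V' → ℝ) × (G'.edgeSet → ℝ)) :=
    (P₁.prod P₂).comp XL with hΘ
  have hUlin : LinearIndependent ℝ u := by
    have h1 : LinearIndependent ℝ (fun a => ((extz i).comp K.subtype) (b a)) :=
      b.linearIndependent.map' _ (LinearMap.ker_eq_bot.mpr
        ((extz_inj i).comp (Submodule.injective_subtype K)))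
    exact h1
  have hinj : Function.Injective Θ := by
    rw [injective_iff_map_eq_zero]
    intro f hf
    rw [hΘ, LinearMap.comp_apply, LinearMap.prod_apply, hXL, Prod.ext_iff] at hf
    obtain ⟨hf1, hf2⟩ := hf
    have h1 : ∀ j : V', Xmat f j.val j.val = 0 := by
      intro j
      have := congrFun hf1 j
      rw [hP₁] at this
      simpa using this
    have h2 : ∀ e : G'.edgeSet,
        Xmat f (Quot.out e.val).1.val (Quot.out e.val).2.val = 0 := by
      intro e
      have := congrFun hf2 e
      rw [hP₂] at this
      simpa using this
    have hdiag : ∀ j, Xmat f j j = 0 := by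
      intro j
      by_cases hj : j = i
      · rw [hj]; exact hXcoli f i
      · exact h1 ⟨j, hj⟩
    have hXedge : ∀ (p q : V'), G'.Adj p q → Xmat f p.val q.val = 0 := by
      intro p q hadj
      have he : s(p, q) ∈ G'.edgeSet := hadj
      have h0 := h2 ⟨s(p, q), he⟩
      have hout : Quot.mk (Sym2.Rel V') (Quot.out (s(p, q))) = s(p, q) := Quot.out_eq _
      rw [show Quot.out (s(p,q)) = ((Quot.out (s(p,q))).1, (Quot.out (s(p,q))).2) from rfl]
        at hout
      rcases Sym2.eq_iff.mp hout with ⟨hp, hq⟩ | ⟨hp, hq⟩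
      · rwa [hp, hq] at h0
      · rw [hp, hq] at h0
        rw [hXsymm']
        exact h0
    have hprod : ∀ j k, A j k * Xmat f j k = 0 := by
      intro j k
      by_cases hA : A j k = 0
      · rw [hA]; ring
      by_cases hjk : j = k
      · subst hjk; rw [hdiag]; ring
      by_cases hji : j = i
      · subst hji; rw [hXrowi]; ring
      by_cases hki : k = i
      · subst hki; rw [hXcoli]; ring
      have hadj : G'.Adj ⟨j, hji⟩ ⟨k, hki⟩ := (hS.2 j k hjk).mp hA
      rw [hXedge ⟨j, hji⟩ ⟨k, hki⟩ hadj]; ring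
    have hAX : ∀ j k, j ≠ i → (A * Xmat f) j k = 0 := by
      intro j k hj
      have hassoc : A * Xmat f = (A * Uᵀ) * (Cmat f * U) := by
        show A * (Uᵀ * Cmat f * U) = _
        simp only [Matrix.mul_assoc]
      have hP : ∀ a, (A * Uᵀ) j a = 0 := by
        intro a
        rw [Matrix.mul_apply]
        simpa [U, u] using hrow j hj (b a)
      rw [hassoc, Matrix.mul_apply]
      simp [hP]
    have hX0 : Xmat f = 0 := hSNIP _ (hXsymm f) hprod hdiag hAX
    have hsum : ∀ c : Fin L → ℝ, (∀ j : V, (∑ a, c a * U a j) = 0) → ∀ a, c a = 0 := by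
      intro c hc
      refine Fintype.linearIndependent_iff.mp hUlin c ?_
      funext j
      simpa [Finset.sum_apply, U, mul_comm] using hc j
    have hcol : Cmat f * U = 0 := by
      ext a k
      refine hsum (fun a => (Cmat f * U) a k) ?_ a
      intro j
      have hXjk : Xmat f j k = (0 : ℝ) := by rw [hX0]; rfl
      show _ = (0 : ℝ)
      rw [← hXjk]
      show ∑ a, (Cmat f * U) a k * U a j = (Uᵀ * Cmat f * U) j k
      rw [Matrix.mul_assoc, Matrix.mul_apply]
      apply Finset.sum_congr rfl
      intro a _
      rw [Matrix.transpose_apply, mul_comm]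
    have hC0 : Cmat f = 0 := by
      have hUC : Uᵀ * Cmat f = 0 := by
        have := congrArg Matrix.transpose hcol
        rwa [Matrix.transpose_mul, hCsymm, Matrix.transpose_zero] at this
      ext a c
      refine hsum (fun a => Cmat f a c) ?_ a
      intro j
      have := congrFun (congrFun hUC j) c
      rw [Matrix.mul_apply] at this
      simpa [Matrix.transpose_apply, mul_comm] using this
    funext e
    induction e with
    | _ a c =>
      have := congrFun (congrFun hC0 a) c
      simpa [Cmat] using this
  have hfin := LinearMap.finrank_le_finrank_of_injective hinj
  rw [Module.finrank_fintype_fun_eq_card, Module.finrank_prod,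
    Module.finrank_fintype_fun_eq_card, Module.finrank_fintype_fun_eq_card,
    Sym2.card, Fintype.card_fin] at hfin
  have hedge : Fintype.card G'.edgeSet = G'.edgeSet.ncard := by
    rw [← Nat.card_coe_set_eq, Nat.card_eq_fintype_card]
  rw [hedge] at hfin
  have hdvd : 2 ∣ (L + 1) * L := by
    rw [Nat.mul_comm]
    exact (Nat.even_mul_succ_self L).two_dvd
  rw [hnl]
  calc L * (L + 1) = ((L + 1).choose 2) * 2 := by
        rw [Nat.choose_two_right, Nat.add_sub_cancel, Nat.div_mul_cancel hdvd, Nat.mul_comm]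
    _ ≤ (Fintype.card V' + G'.edgeSet.ncard) * 2 := Nat.mul_le_mul_right 2 hfin
    _ = 2 * Fintype.card V' + 2 * G'.edgeSet.ncard := by ring

lemma comap_compl (G : SimpleGraph V) (i : V) :
    (Gᶜ).comap (Subtype.val : {j : V // j ≠ i} → V) =
      (G.comap (Subtype.val : {j : V // j ≠ i} → V))ᶜ := by
  ext a c
  simp only [SimpleGraph.comap_adj, SimpleGraph.compl_adj, Subtype.coe_ne_coe]

lemma count_edges (G : SimpleGraph V) (i : V) :
    (G.comap (Subtype.val : {j : V // j ≠ i} → V)).edgeSet.ncard +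
      ((G.comap (Subtype.val : {j : V // j ≠ i} → V))ᶜ).edgeSet.ncard =
      (Fintype.card {j : V // j ≠ i}).choose 2 := by
  classical
  set V' := {j : V // j ≠ i}
  set G' := G.comap (Subtype.val : V' → V) with hG'
  have hdisj : Disjoint G'.edgeSet G'ᶜ.edgeSet := by
    rw [Set.disjoint_iff_inter_eq_empty, ← SimpleGraph.edgeSet_inf, inf_compl_eq_bot,
      SimpleGraph.edgeSet_bot]
  rw [← Set.ncard_union_eq hdisj (Set.toFinite _) (Set.toFinite _),
    ← SimpleGraph.edgeSet_sup, sup_compl_eq_top]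
  rw [← Nat.card_coe_set_eq, Nat.card_eq_fintype_card, ← SimpleGraph.edgeFinset_card,
    SimpleGraph.card_edgeFinset_top_eq_card_choose_two]

theorem stmt16 (G : SimpleGraph V) (i : V) :
    (xixi G i + xixi Gᶜ i : ℝ) ≤ 2 * Real.sqrt 2 * Fintype.card V := by
  classical
  have hb : ∀ H : SimpleGraph V, ∃ LH : ℕ, xixi H i ≤ 2 * LH ∧
      LH * (LH + 1) ≤ 2 * Fintype.card {j : V // j ≠ i} +
        2 * (H.comap (Subtype.val : {j : V // j ≠ i} → V)).edgeSet.ncard := by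
    intro H
    by_cases hne : {s | ∃ k ℓ : ℕ, k ≤ ℓ ∧ s = k + ℓ ∧ ∃ A : Matrix V V ℝ,
        InS H A ∧ HasSNIP A i ∧ nullity A = k ∧ nullity (delRC A i) = ℓ}.Nonempty
    · have hbdd : BddAbove {s | ∃ k ℓ : ℕ, k ≤ ℓ ∧ s = k + ℓ ∧ ∃ A : Matrix V V ℝ,
          InS H A ∧ HasSNIP A i ∧ nullity A = k ∧ nullity (delRC A i) = ℓ} := by
        refine ⟨2 * Fintype.card V, ?_⟩
        rintro s ⟨k, ℓ, hkl, rfl, A, hA, hsnip, hk, hl⟩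
        have hℓ : ℓ ≤ Fintype.card V := by
          rw [← hl]
          calc nullity (delRC A i) ≤ Module.finrank ℝ ({j : V // j ≠ i} → ℝ) :=
                Submodule.finrank_le _
            _ = Fintype.card {j : V // j ≠ i} := Module.finrank_fintype_fun_eq_card ℝ
            _ ≤ Fintype.card V := Fintype.card_subtype_le _
        omega
      have hmem := Nat.sSup_mem hne hbdd
      obtain ⟨k, ℓ, hkl, hsum, A, hA, hsnip, hk, hl⟩ := hmem
      refine ⟨ℓ, ?_, ?_⟩
      · have hx : xixi H i = k + ℓ := hsum
        rw [hx]; omega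
      · have := key_bound H i A hA hsnip
        rwa [hl] at this
    · refine ⟨0, ?_, by simp⟩
      have hx : xixi H i = 0 := by
        unfold xixi
        rw [Set.not_nonempty_iff_eq_empty.mp hne, csSup_empty]
        rfl
      rw [hx]
  obtain ⟨L₁, h1, q1⟩ := hb G
  obtain ⟨L₂, h2, q2⟩ := hb Gᶜ
  rw [comap_compl] at q2
  have hcount := count_edges G i
  set m := Fintype.card {j : V // j ≠ i} with hm
  set E₁ := (G.comap (Subtype.val : {j : V // j ≠ i} → V)).edgeSet.ncard with hE₁
  set E₂ := ((G.comap (Subtype.val : {j : V // j ≠ i} → V))ᶜ).edgeSet.ncard with hE₂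
  have hn1 : 1 ≤ Fintype.card V := Fintype.card_pos_iff.mpr ⟨i⟩
  have hmn : m + 1 = Fintype.card V := by
    rw [hm]
    have : Fintype.card {j : V // j ≠ i} = Fintype.card V - 1 := by
      have h1 := Fintype.card_subtype_compl (fun j : V => j = i)
      have h2 : Fintype.card {j : V // j = i} = 1 := Fintype.card_subtype_eq i
      rw [h2] at h1
      exact h1
    omega
  -- move to the reals
  have hx1 : (xixi G i : ℝ) ≤ 2 * L₁ := by exact_mod_cast h1
  have hx2 : (xixi Gᶜ i : ℝ) ≤ 2 * L₂ := by exact_mod_cast h2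
  have hq1 : (L₁ : ℝ) * (L₁ + 1) ≤ 2 * m + 2 * E₁ := by exact_mod_cast q1
  have hq2 : (L₂ : ℝ) * (L₂ + 1) ≤ 2 * m + 2 * E₂ := by exact_mod_cast q2
  have hcr : (E₁ : ℝ) + E₂ = (m : ℝ) * ((m : ℝ) - 1) / 2 := by
    rw [← Nat.cast_choose_two, ← hcount]
    push_cast
    ring
  have hmr : (m : ℝ) = (Fintype.card V : ℝ) - 1 := by
    have : ((m : ℕ) : ℝ) + 1 = ((Fintype.card V : ℕ) : ℝ) := by exact_mod_cast hmn
    linarith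
  have hnr : (1 : ℝ) ≤ (Fintype.card V : ℝ) := by exact_mod_cast hn1
  have hs2 : Real.sqrt 2 ^ 2 = 2 := Real.sq_sqrt (by norm_num)
  have hs1 : (1 : ℝ) ≤ Real.sqrt 2 := by
    nlinarith [Real.sqrt_nonneg 2]
  have hL1 : (0 : ℝ) ≤ (L₁ : ℝ) := Nat.cast_nonneg _
  have hL2 : (0 : ℝ) ≤ (L₂ : ℝ) := Nat.cast_nonneg _
  rw [hmr] at hq1 hq2 hcr
  have h2n : (Real.sqrt 2 * (Fintype.card V : ℝ)) ^ 2 = 2 * (Fintype.card V : ℝ) ^ 2 := by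
    rw [mul_pow, hs2]
  have key : (L₁ : ℝ) + L₂ ≤ Real.sqrt 2 * (Fintype.card V : ℝ) := by
    by_contra hcon
    push_neg at hcon
    have ht : (0:ℝ) ≤ (L₁ : ℝ) + L₂ := by linarith
    have hsn : (0:ℝ) ≤ Real.sqrt 2 * (Fintype.card V : ℝ) := by positivity
    have hprod : ((L₁:ℝ) + L₂ - Real.sqrt 2 * (Fintype.card V : ℝ)) *
        ((L₁:ℝ) + L₂ + Real.sqrt 2 * (Fintype.card V : ℝ)) > 0 := by
      apply mul_pos <;> nlinarith
    have ht2 : ((L₁:ℝ) + L₂) ^ 2 > 2 * (Fintype.card V : ℝ) ^ 2 := by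
      nlinarith [hprod, h2n]
    have htn : (Fintype.card V : ℝ) < (L₁:ℝ) + L₂ := by
      have hmul : (1:ℝ) * (Fintype.card V : ℝ) ≤ Real.sqrt 2 * (Fintype.card V : ℝ) :=
        mul_le_mul_of_nonneg_right hs1 (by linarith)
      linarith
    nlinarith [ht2, sq_nonneg ((L₁:ℝ) - L₂), hq1, hq2, hcr, hnr, htn]
  linarith
end

section
/- Let (G,i) be a rooted graph on a finite vertex set V and let A ∈ S(G). Let K = {x ∈ ℝ^V : (Ax)_j = 0 for all j ≠ i} be the right kernel of the matrix A with row i deleted, and let m = dim K. Then A has i-SNIP if and only if for every V×m real matrix N whose columns form a basis of K, with rows denoted u_jᵀ (j ∈ V), the set of symmetric m×m matrices consisting of the vertex ingredients u_j u_jᵀ for j ∈ V together with the edge ingredients u_j u_kᵀ + u_k u_jᵀ for edges {j,k} of G spans the entire space of m×m real symmetric matrices. -/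
open Matrix

variable {V : Type*} [Fintype V] [DecidableEq V]

/-- `N` gives a full recipe from `G`: the vertex ingredients `uⱼuⱼᵀ` and edge ingredients
`uⱼuₖᵀ + uₖuⱼᵀ` (where `uⱼᵀ` is row `j` of `N`) span all real symmetric `m × m` matrices. -/
def GivesFullRecipe {m : ℕ} (G : SimpleGraph V) (N : Matrix V (Fin m) ℝ) : Prop :=
  ∀ M : Matrix (Fin m) (Fin m) ℝ, M.IsSymm →
    M ∈ Submodule.span ℝ
      ({P : Matrix (Fin m) (Fin m) ℝ | ∃ j : V, P = Matrix.of fun a b => N j a * N j b} ∪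
       {P : Matrix (Fin m) (Fin m) ℝ | ∃ j k : V, G.Adj j k ∧
          P = Matrix.of fun a b => N j a * N k b + N k a * N j b})

set_option linter.unusedSectionVars false

/-- Frobenius pairing with `M`, as a linear functional. -/
noncomputable def phiL {m : ℕ} (M : Matrix (Fin m) (Fin m) ℝ) :
    Matrix (Fin m) (Fin m) ℝ →ₗ[ℝ] ℝ where
  toFun P := ∑ a, ∑ b, M a b * P a b
  map_add' P Q := by
    simp [Matrix.add_apply, mul_add, Finset.sum_add_distrib]
  map_smul' c P := by
    simp [Matrix.smul_apply, Finset.mul_sum, smul_eq_mul, mul_left_comm]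

lemma phiL_apply {m : ℕ} (M P : Matrix (Fin m) (Fin m) ℝ) :
    phiL M P = ∑ a, ∑ b, M a b * P a b := rfl

lemma mulmul_entry {m : ℕ} (N : Matrix V (Fin m) ℝ) (M : Matrix (Fin m) (Fin m) ℝ) (j k : V) :
    (N * M * Nᵀ) j k = ∑ a, ∑ b, N j a * M a b * N k b := by
  simp only [Matrix.mul_apply, Matrix.transpose_apply, Finset.sum_mul]
  rw [Finset.sum_comm]

lemma phi_NMN {m : ℕ} (N : Matrix V (Fin m) ℝ) (M : Matrix (Fin m) (Fin m) ℝ) (j k : V) :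
    phiL M (Matrix.of fun a b => N j a * N k b) = (N * M * Nᵀ) j k := by
  rw [mulmul_entry]
  show (∑ a, ∑ b, M a b * (N j a * N k b)) = _
  apply Finset.sum_congr rfl; intro a _
  apply Finset.sum_congr rfl; intro b _
  ring

lemma ing_split {m : ℕ} (N : Matrix V (Fin m) ℝ) (j k : V) :
    (Matrix.of fun a b => N j a * N k b + N k a * N j b) =
      (Matrix.of fun a b => N j a * N k b) + (Matrix.of fun a b => N k a * N j b) := rfl

lemma phi_NMN_edge {m : ℕ} (N : Matrix V (Fin m) ℝ) (M : Matrix (Fin m) (Fin m) ℝ) (j k : V) :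
    phiL M (Matrix.of fun a b => N j a * N k b + N k a * N j b) =
      (N * M * Nᵀ) j k + (N * M * Nᵀ) k j := by
  rw [ing_split, map_add, phi_NMN, phi_NMN]

lemma exists_leftInv {m : ℕ} (N : Matrix V (Fin m) ℝ)
    (h : LinearIndependent ℝ (fun c : Fin m => Nᵀ c)) :
    ∃ Q : Matrix (Fin m) V ℝ, Q * N = 1 := by
  have hker : LinearMap.ker (Matrix.toLin' N) = ⊥ := by
    rw [LinearMap.ker_eq_bot']
    intro x hx
    have hz : ∑ c, x c • (fun j => Nᵀ c j) = (0 : V → ℝ) := by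
      funext j
      have : Matrix.toLin' N x j = 0 := by rw [hx]; rfl
      simpa [Matrix.toLin'_apply, Matrix.mulVec, dotProduct, mul_comm,
        Finset.sum_apply] using this
    have := Fintype.linearIndependent_iff.mp h x (by exact hz)
    funext c; exact this c
  obtain ⟨g, hg⟩ := (Matrix.toLin' N).exists_leftInverse_of_injective hker
  refine ⟨LinearMap.toMatrix' g, ?_⟩
  have := congrArg LinearMap.toMatrix' hg
  rwa [LinearMap.toMatrix'_comp, LinearMap.toMatrix'_toLin', LinearMap.toMatrix'_id] at this

lemma col_mem {m : ℕ} (N : Matrix V (Fin m) ℝ) (C : Matrix (Fin m) V ℝ) (k : V) :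
    (fun j => (N * C) j k) ∈ Submodule.span ℝ (Set.range fun c : Fin m => Nᵀ c) := by
  have h : Submodule.span ℝ (Set.range fun c : Fin m => Nᵀ c)
      = LinearMap.range N.mulVecLin := by rw [Matrix.range_mulVecLin]; rfl
  rw [h]
  exact ⟨fun a => C a k, by
    funext j; simp [Matrix.mulVecLin_apply, Matrix.mulVec, dotProduct, Matrix.mul_apply]⟩

lemma M_of_NMN_zero {m : ℕ} {N : Matrix V (Fin m) ℝ} {Q : Matrix (Fin m) V ℝ}
    (hQ : Q * N = 1) {M : Matrix (Fin m) (Fin m) ℝ} (h : N * M * Nᵀ = 0) : M = 0 := by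
  have h1 : Nᵀ * Qᵀ = 1 := by rw [← Matrix.transpose_mul, hQ, Matrix.transpose_one]
  calc M = (Q * N) * M * (Nᵀ * Qᵀ) := by rw [hQ, h1, Matrix.one_mul, Matrix.mul_one]
    _ = Q * (N * M * Nᵀ) * Qᵀ := by simp only [Matrix.mul_assoc]
    _ = 0 := by rw [h]; simp

lemma factor {m : ℕ} (N : Matrix V (Fin m) ℝ) (Q : Matrix (Fin m) V ℝ) (hQ : Q * N = 1)
    (X : Matrix V V ℝ) (hX : X.IsSymm)
    (hcol : ∀ k, (fun j => X j k) ∈ Submodule.span ℝ (Set.range fun c : Fin m => Nᵀ c)) :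
    X = N * (Q * X * Qᵀ) * Nᵀ ∧ (Q * X * Qᵀ).IsSymm := by
  have hNQX : N * Q * X = X := by
    ext j k
    obtain ⟨y, hy⟩ : ∃ y, N.mulVec y = fun j => X j k := by
      have h0 := hcol k
      rw [show Submodule.span ℝ (Set.range fun c : Fin m => Nᵀ c)
          = LinearMap.range N.mulVecLin from (Matrix.range_mulVecLin N).symm] at h0
      exact h0
    have e1 : (N * Q * X) j k = ((N * Q) *ᵥ (N *ᵥ y)) j := by
      rw [hy]; rfl
    rw [e1, Matrix.mulVec_mulVec, Matrix.mul_assoc, hQ, Matrix.mul_one, hy]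
  have h2 : X * (Qᵀ * Nᵀ) = X := by
    have e : (X * (Qᵀ * Nᵀ))ᵀ = X := by
      rw [Matrix.transpose_mul, Matrix.transpose_mul, Matrix.transpose_transpose,
        Matrix.transpose_transpose, hX.eq]
      exact hNQX
    calc X * (Qᵀ * Nᵀ) = (X * (Qᵀ * Nᵀ))ᵀᵀ := by rw [Matrix.transpose_transpose]
      _ = Xᵀ := by rw [e]
      _ = X := hX.eq
  constructor
  · calc X = X * (Qᵀ * Nᵀ) := h2.symm
      _ = (N * Q * X) * (Qᵀ * Nᵀ) := by rw [hNQX]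
      _ = N * (Q * X * Qᵀ) * Nᵀ := by simp only [Matrix.mul_assoc]
  · show (Q * X * Qᵀ)ᵀ = _
    rw [Matrix.transpose_mul, Matrix.transpose_mul, Matrix.transpose_transpose,
      hX.eq, ← Matrix.mul_assoc]

lemma phi_symm_rep {m : ℕ} (f : Module.Dual ℝ (Matrix (Fin m) (Fin m) ℝ)) :
    ∃ M : Matrix (Fin m) (Fin m) ℝ, M.IsSymm ∧
      ∀ P : Matrix (Fin m) (Fin m) ℝ, P.IsSymm → phiL M P = f P := by
  refine ⟨Matrix.of fun a b =>
    (f (Matrix.single a b 1) + f (Matrix.single b a 1)) / 2, ?_, ?_⟩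
  · ext a b
    simp [Matrix.transpose_apply, add_comm]
  · intro P hP
    have hfP : f P = ∑ a, ∑ b, P a b * f (Matrix.single a b 1) := by
      conv_lhs => rw [Matrix.matrix_eq_sum_single P]
      rw [map_sum]
      refine Finset.sum_congr rfl fun a _ => ?_
      rw [map_sum]
      refine Finset.sum_congr rfl fun b _ => ?_
      rw [show Matrix.single a b (P a b) = P a b • Matrix.single a b 1 by
        rw [Matrix.smul_single, smul_eq_mul, mul_one], _root_.map_smul, smul_eq_mul]
    rw [hfP, phiL_apply]
    have h1 : ∀ a b : Fin m, (Matrix.of fun a b =>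
        (f (Matrix.single a b 1) + f (Matrix.single b a 1)) / 2) a b * P a b
        = (f (Matrix.single a b 1) * P a b
            + f (Matrix.single b a 1) * P a b) / 2 := by
      intro a b; simp [Matrix.of_apply]; ring
    simp only [h1]
    have h2 : ∑ a, ∑ b, f (Matrix.single b a 1) * P a b
        = ∑ a, ∑ b, f (Matrix.single a b 1) * P a b := by
      rw [Finset.sum_comm]
      refine Finset.sum_congr rfl fun a _ => Finset.sum_congr rfl fun b _ => ?_
      rw [hP.apply]
    calc ∑ a, ∑ b, (f (Matrix.single a b 1) * P a b
          + f (Matrix.single b a 1) * P a b) / 2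
        = ((∑ a, ∑ b, f (Matrix.single a b 1) * P a b)
          + ∑ a, ∑ b, f (Matrix.single b a 1) * P a b) / 2 := by
          simp [add_div, Finset.sum_add_distrib, Finset.sum_div]
      _ = ∑ a, ∑ b, f (Matrix.single a b 1) * P a b := by rw [h2]; ring
      _ = ∑ a, ∑ b, P a b * f (Matrix.single a b 1) :=
          Finset.sum_congr rfl fun a _ => Finset.sum_congr rfl fun b _ => mul_comm _ _

theorem stmt17 (G : SimpleGraph V) (i : V) (A : Matrix V V ℝ) (hA : InS G A)
    (K : Submodule ℝ (V → ℝ))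
    (hK : ∀ x, x ∈ K ↔ ∀ j, j ≠ i → A.mulVec x j = 0)
    (m : ℕ) (hm : Module.finrank ℝ K = m) :
    HasSNIP A i ↔
      ∀ N : Matrix V (Fin m) ℝ,
        LinearIndependent ℝ (fun c : Fin m => Nᵀ c) →
        Submodule.span ℝ (Set.range fun c : Fin m => Nᵀ c) = K →
        GivesFullRecipe G N := by
  constructor
  · -- SNIP → full recipe
    intro hS N hind hspan M₀ hM₀symm
    by_contra hM₀
    set W := Submodule.span ℝ
      ({P : Matrix (Fin m) (Fin m) ℝ | ∃ j : V, P = Matrix.of fun a b => N j a * N j b} ∪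
       {P : Matrix (Fin m) (Fin m) ℝ | ∃ j k : V, G.Adj j k ∧
          P = Matrix.of fun a b => N j a * N k b + N k a * N j b}) with hW
    obtain ⟨Q, hQ⟩ := exists_leftInv N hind
    have hq : W.mkQ M₀ ≠ 0 := by
      simpa [Submodule.mkQ_apply, Submodule.Quotient.mk_eq_zero] using hM₀
    obtain ⟨g, hg⟩ : ∃ g : Module.Dual ℝ (Matrix (Fin m) (Fin m) ℝ ⧸ W),
        g (W.mkQ M₀) ≠ 0 := by
      by_contra h; push_neg at h
      exact hq ((Module.forall_dual_apply_eq_zero_iff ℝ (W.mkQ M₀)).mp h)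
    set f : Module.Dual ℝ (Matrix (Fin m) (Fin m) ℝ) := g.comp W.mkQ with hf
    have hfW : ∀ P ∈ W, f P = 0 := by
      intro P hP
      have : W.mkQ P = 0 := by
        simpa [Submodule.mkQ_apply, Submodule.Quotient.mk_eq_zero] using hP
      simp [hf, LinearMap.comp_apply, this]
    obtain ⟨M, hMsymm, hMrep⟩ := phi_symm_rep f
    set X := N * M * Nᵀ with hXdef
    have hXsymm : X.IsSymm := by
      show Xᵀ = X
      rw [hXdef, Matrix.transpose_mul, Matrix.transpose_mul, Matrix.transpose_transpose,
        hMsymm.eq, ← Matrix.mul_assoc]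
    have hvertW : ∀ j : V, (Matrix.of fun a b => N j a * N j b) ∈ W :=
      fun j => Submodule.subset_span (Or.inl ⟨j, rfl⟩)
    have hedgeW : ∀ j k : V, G.Adj j k →
        (Matrix.of fun a b => N j a * N k b + N k a * N j b) ∈ W :=
      fun j k h => Submodule.subset_span (Or.inr ⟨j, k, h, rfl⟩)
    have hvertsymm : ∀ j : V, (Matrix.of fun a b => N j a * N j b).IsSymm := by
      intro j; ext a b; simp [Matrix.transpose_apply, mul_comm]
    have hedgesymm : ∀ j k : V,
        (Matrix.of fun a b => N j a * N k b + N k a * N j b).IsSymm := by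
      intro j k; ext a b
      simp only [Matrix.transpose_apply, Matrix.of_apply]
      ring
    have hdiag : ∀ j, X j j = 0 := by
      intro j
      rw [hXdef, ← phi_NMN N M j j, hMrep _ (hvertsymm j), hfW _ (hvertW j)]
    have hedge0 : ∀ j k : V, G.Adj j k → X j k = 0 := by
      intro j k hadj
      have h0 : X j k + X k j = 0 := by
        rw [hXdef, ← phi_NMN_edge N M j k, hMrep _ (hedgesymm j k), hfW _ (hedgeW j k hadj)]
      rw [hXsymm.apply j k] at h0
      linarith
    have hAX : ∀ j k, A j k * X j k = 0 := by
      intro j k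
      rcases eq_or_ne j k with rfl | hjk
      · rw [hdiag j, mul_zero]
      by_cases hAjk : A j k = 0
      · rw [hAjk, zero_mul]
      · rw [hedge0 j k ((hA.2 j k hjk).mp hAjk), mul_zero]
    have hAX0 : ∀ j k, j ≠ i → (A * X) j k = 0 := by
      intro j k hj
      have hcolK : (fun l => X l k) ∈ K := by
        rw [← hspan]
        have := col_mem N (M * Nᵀ) k
        rw [← Matrix.mul_assoc] at this
        exact this
      have := (hK _).mp hcolK j hj
      have he : (A * X) j k = A.mulVec (fun l => X l k) j := by
        simp [Matrix.mulVec, dotProduct, Matrix.mul_apply]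
      rw [he, this]
    have hX0 : X = 0 := hS X hXsymm hAX hdiag hAX0
    have hM0 : M = 0 := M_of_NMN_zero hQ (hXdef ▸ hX0)
    have : f M₀ = 0 := by
      rw [← hMrep M₀ hM₀symm, hM0, phiL_apply]
      simp
    exact hg (by simpa [hf] using this)
  · -- full recipe → SNIP
    intro hrec X hXsymm hAX hdiag hAX0
    let b : Module.Basis (Fin m) ℝ K := Module.finBasisOfFinrankEq ℝ K hm
    set N : Matrix V (Fin m) ℝ := Matrix.of fun j c => (b c : V → ℝ) j with hN
    have hcoe : (fun c : Fin m => Nᵀ c) = fun c : Fin m => (K.subtype (b c) : V → ℝ) := rfl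
    have hind : LinearIndependent ℝ (fun c : Fin m => Nᵀ c) := by
      rw [hcoe]
      exact b.linearIndependent.map' K.subtype K.ker_subtype
    have hspan : Submodule.span ℝ (Set.range fun c : Fin m => Nᵀ c) = K := by
      rw [hcoe]
      rw [show (Set.range fun c : Fin m => (K.subtype (b c) : V → ℝ))
          = K.subtype '' Set.range b from (Set.range_comp _ _)]
      rw [Submodule.span_image, b.span_eq, Submodule.map_subtype_top]
    obtain ⟨Q, hQ⟩ := exists_leftInv N hind
    have hcol : ∀ k, (fun j => X j k) ∈ Submodule.span ℝ (Set.range fun c : Fin m => Nᵀ c) := by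
      intro k
      rw [hspan, hK]
      intro j hj
      have he : A.mulVec (fun l => X l k) j = (A * X) j k := by
        simp [Matrix.mulVec, dotProduct, Matrix.mul_apply]
      rw [he]
      exact hAX0 j k hj
    obtain ⟨hfac, hMsymm⟩ := factor N Q hQ X hXsymm hcol
    set M := Q * X * Qᵀ with hM
    have hrecM := hrec N hind hspan M hMsymm
    have hker : Submodule.span ℝ
        ({P : Matrix (Fin m) (Fin m) ℝ | ∃ j : V, P = Matrix.of fun a b => N j a * N j b} ∪
         {P : Matrix (Fin m) (Fin m) ℝ | ∃ j k : V, G.Adj j k ∧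
            P = Matrix.of fun a b => N j a * N k b + N k a * N j b})
        ≤ LinearMap.ker (phiL M) := by
      rw [Submodule.span_le]
      rintro P (⟨j, rfl⟩ | ⟨j, k, hadj, rfl⟩)
      · simp only [SetLike.mem_coe, LinearMap.mem_ker]
        rw [phi_NMN, ← hfac]
        exact hdiag j
      · simp only [SetLike.mem_coe, LinearMap.mem_ker]
        rw [phi_NMN_edge, ← hfac]
        have hne : j ≠ k := hadj.ne
        have hAjk : A j k ≠ 0 := (hA.2 j k hne).mpr hadj
        have hXjk : X j k = 0 := by
          rcases mul_eq_zero.mp (hAX j k) with h | h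
          · exact absurd h hAjk
          · exact h
        have hXkj : X k j = 0 := by rw [hXsymm.apply j k, hXjk]
        rw [hXjk, hXkj, add_zero]
    have hMM : phiL M M = 0 := LinearMap.mem_ker.mp (hker hrecM)
    have hM0 : M = 0 := by
      rw [phiL_apply] at hMM
      ext a b
      have h1 : ∀ a ∈ (Finset.univ : Finset (Fin m)), 0 ≤ ∑ b, M a b * M a b :=
        fun a _ => Finset.sum_nonneg fun b _ => mul_self_nonneg _
      have h2 := (Finset.sum_eq_zero_iff_of_nonneg h1).mp hMM a (Finset.mem_univ a)
      have h3 := (Finset.sum_eq_zero_iff_of_nonneg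
        (fun b _ => mul_self_nonneg (M a b))).mp h2 b (Finset.mem_univ b)
      simpa using mul_self_eq_zero.mp h3
    rw [hfac, hM0]
    simp
end

section
/- Let (G,i) be a rooted graph on a finite vertex set V with at least 2 vertices, let k ≥ 0, and suppose A ∈ S(G) has i-SNIP with null(A) = k and null(A(i)) = k+1. Then there exists a vertex j adjacent to i in G and a matrix A' ∈ S(G') with i-SNIP satisfying null(A') = k and null(A'(i)) = k+1, where G' is the spanning subgraph of G obtained from G by deleting all edges incident to i except the edge {i,j}. In particular, if i is not a leaf of G, then (G,i) has a proper rooted subgraph allowing the nullity pair (k,k+1) with i-SNIP. -/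
set_option linter.unusedSectionVars false
set_option linter.unusedVariables false


open Matrix Finset

variable {V : Type*} [Fintype V] [DecidableEq V]

/-- The spanning subgraph of `G` obtained by deleting all edges incident to `i`
except the edge `{i, j}`. -/
def pruneAt (G : SimpleGraph V) (i j : V) : SimpleGraph V where
  Adj x y := G.Adj x y ∧ (x = i → y = j) ∧ (y = i → x = j)
  symm := by
    constructor
    intro x y h
    exact ⟨h.1.symm, h.2.2, h.2.1⟩
  loopless := by
    constructor
    intro x h
    exact G.ne_of_adj h.1 rfl

lemma sum_split (i : V) (f : V → ℝ) : ∑ u, f u = f i + ∑ u : {j // j ≠ i}, f u.val := by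
  rw [← Finset.sum_erase_add _ _ (Finset.mem_univ i), add_comm]
  congr 1
  rw [Finset.sum_subtype (p := fun j => j ≠ i)]
  intro x; simp [Finset.mem_erase]

noncomputable def ext0 (i : V) : ({j : V // j ≠ i} → ℝ) →ₗ[ℝ] (V → ℝ) where
  toFun x v := if h : v = i then 0 else x ⟨v, h⟩
  map_add' x y := by funext v; by_cases h : v = i <;> simp [h]
  map_smul' c x := by funext v; by_cases h : v = i <;> simp [h]

lemma ext0_inj (i : V) : Function.Injective (ext0 (V := V) i) := by
  intro x y h
  funext u
  have := congrFun h u.val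
  simpa [ext0, u.prop] using this

lemma ext0_apply_ne (i : V) (x : {j : V // j ≠ i} → ℝ) (v : V) (h : v ≠ i) :
    ext0 i x v = x ⟨v, h⟩ := by simp [ext0, h]

lemma ext0_apply_i (i : V) (x : {j : V // j ≠ i} → ℝ) : ext0 i x i = 0 := by simp [ext0]

/-- mulVec of A on an extended-by-zero vector, at a coordinate v ≠ i -/
lemma mulVec_ext0_ne (A : Matrix V V ℝ) (i : V) (x : {j : V // j ≠ i} → ℝ) (v : V) (hv : v ≠ i) :
    A.mulVec (ext0 i x) v = (delRC A i).mulVec x ⟨v, hv⟩ := by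
  show ∑ u, A v u * ext0 i x u = _
  rw [sum_split i]
  simp only [ext0_apply_i, mul_zero, zero_add]
  simp only [mulVec, dotProduct, delRC, submatrix_apply]
  congr 1; funext u; rw [ext0_apply_ne i x u.val u.prop]

lemma mulVec_ext0_i (A : Matrix V V ℝ) (i : V) (x : {j : V // j ≠ i} → ℝ) :
    A.mulVec (ext0 i x) i = ∑ u : {j : V // j ≠ i}, A i u.val * x u := by
  show ∑ u, A i u * ext0 i x u = _
  rw [sum_split i]
  simp only [ext0_apply_i, mul_zero, zero_add]
  congr 1; funext u; rw [ext0_apply_ne i x u.val u.prop]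

lemma exists_good (A : Matrix V V ℝ) (i : V) (k : ℕ)
    (h1 : nullity A = k) (h2 : nullity (delRC A i) = k + 1) :
    ∃ j' : {j : V // j ≠ i}, ∃ x0 : {j : V // j ≠ i} → ℝ,
      (delRC A i).mulVec x0 = 0 ∧ A i j'.val ≠ 0 ∧ x0 j' ≠ 0 := by
  by_contra hcon
  push_neg at hcon
  -- then every kernel vector of B pairs to zero with row i, so ext0 embeds ker B into ker A
  have key : ∀ x0 : {j : V // j ≠ i} → ℝ, (delRC A i).mulVec x0 = 0 →
      A.mulVec (ext0 i x0) = 0 := by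
    intro x0 hx0
    funext v
    show A.mulVec (ext0 i x0) v = 0
    by_cases hv : v = i
    · rw [hv, mulVec_ext0_i]
      apply Finset.sum_eq_zero
      intro u _
      rcases eq_or_ne (A i u.val) 0 with h | h
      · rw [h, zero_mul]
      · rw [hcon u x0 hx0 h, mul_zero]
    · rw [mulVec_ext0_ne A i x0 v hv, hx0]; rfl
  -- so map ext0 (ker B) ≤ ker A, contradiction with dimensions
  have hle : Submodule.map (ext0 i) (LinearMap.ker (delRC A i).mulVecLin) ≤
      LinearMap.ker A.mulVecLin := by
    rintro y ⟨x0, hx0, rfl⟩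
    exact key x0 hx0
  have e := Submodule.equivMapOfInjective (ext0 i) (ext0_inj i)
      (LinearMap.ker (delRC A i).mulVecLin)
  have h3 : Module.finrank ℝ (Submodule.map (ext0 i) (LinearMap.ker (delRC A i).mulVecLin))
      = k + 1 := by rw [← e.finrank_eq]; exact h2
  have h4 := Submodule.finrank_mono hle
  rw [h3] at h4
  have h5 : nullity A = k := h1
  rw [show nullity A = Module.finrank ℝ (LinearMap.ker A.mulVecLin) from rfl] at h5
  omega

def pruneMat (A : Matrix V V ℝ) (i j : V) : Matrix V V ℝ := fun u v =>
  if u = i then (if v = i then A i i else if v = j then A i j else 0)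
  else if v = i then (if u = j then A i j else 0) else A u v

lemma pruneMat_ne_ne (A : Matrix V V ℝ) (i j : V) {u v : V} (hu : u ≠ i) (hv : v ≠ i) :
    pruneMat A i j u v = A u v := by simp [pruneMat, hu, hv]

lemma pruneMat_i_ne (A : Matrix V V ℝ) (i j : V) {v : V} (hv : v ≠ i) :
    pruneMat A i j i v = if v = j then A i j else 0 := by simp [pruneMat, hv]

lemma pruneMat_ne_i (A : Matrix V V ℝ) (i j : V) {u : V} (hu : u ≠ i) :
    pruneMat A i j u i = if u = j then A i j else 0 := by simp [pruneMat, hu]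

lemma pruneMat_ii (A : Matrix V V ℝ) (i j : V) : pruneMat A i j i i = A i i := by
  simp [pruneMat]

lemma pruneMat_isSymm (A : Matrix V V ℝ) (i j : V) (hA : A.IsSymm) :
    (pruneMat A i j).IsSymm := by
  rw [Matrix.IsSymm]
  ext u v
  rw [transpose_apply]
  by_cases hu : u = i <;> by_cases hv : v = i <;>
    simp [pruneMat, hu, hv]
  exact hA.apply u v

lemma delRC_pruneMat (A : Matrix V V ℝ) (i j : V) :
    delRC (pruneMat A i j) i = delRC A i := by
  ext u v
  exact pruneMat_ne_ne A i j u.prop v.prop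

lemma pair_zero {n : Type*} [Fintype n] (B : Matrix n n ℝ) (hB : B.IsSymm)
    (x0 w : n → ℝ) (h : B.mulVec x0 = 0) : x0 ⬝ᵥ B.mulVec w = 0 := by
  rw [Matrix.dotProduct_mulVec, ← Matrix.mulVec_transpose, hB.eq, h]
  simp [dotProduct]

lemma delRC_isSymm (A : Matrix V V ℝ) (i : V) (hA : A.IsSymm) : (delRC A i).IsSymm := by
  rw [Matrix.IsSymm]
  ext u v
  rw [transpose_apply]
  exact hA.apply u.val v.val

lemma ker_pruneMat (A : Matrix V V ℝ) (i : V) (j' : {j : V // j ≠ i})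
    (x0 : {j : V // j ≠ i} → ℝ) (hsym : A.IsSymm)
    (hB0 : (delRC A i).mulVec x0 = 0) (hAij : A i j'.val ≠ 0) (hx0j : x0 j' ≠ 0) :
    LinearMap.ker (pruneMat A i j'.val).mulVecLin =
      Submodule.map (ext0 i)
        (LinearMap.ker (delRC A i).mulVecLin ⊓
         LinearMap.ker (LinearMap.proj (R := ℝ) (φ := fun _ : {j : V // j ≠ i} => ℝ) j')) := by
  have hBsym : (delRC A i).IsSymm := delRC_isSymm A i hsym
  -- key row computation: for any y and l ≠ i
  have roweq : ∀ (y : V → ℝ) (l' : {j : V // j ≠ i}),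
      (pruneMat A i j'.val).mulVec y l'.val =
        (if l'.val = j'.val then A i j'.val else 0) * y i +
          (delRC A i).mulVec (fun u => y u.val) l' := by
    intro y l'
    rw [show (pruneMat A i j'.val).mulVec y l'.val
        = ∑ u, pruneMat A i j'.val l'.val u * y u from rfl, sum_split i]
    congr 1
    · rw [pruneMat_ne_i A i j'.val l'.prop]
    · simp only [mulVec, dotProduct, delRC, submatrix_apply]
      exact Finset.sum_congr rfl fun u _ => by
        rw [pruneMat_ne_ne A i j'.val l'.prop u.prop]
  have roweqi : ∀ (y : V → ℝ),
      (pruneMat A i j'.val).mulVec y i = A i i * y i + A i j'.val * y j'.val := by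
    intro y
    rw [show (pruneMat A i j'.val).mulVec y i
        = ∑ u, pruneMat A i j'.val i u * y u from rfl, sum_split i]
    congr 1
    · rw [pruneMat_ii]
    · rw [Finset.sum_eq_single j']
      · rw [pruneMat_i_ne A i j'.val j'.prop, if_pos rfl]
      · intro b _ hb
        have hbv : b.val ≠ j'.val := fun h => hb (Subtype.ext h)
        rw [pruneMat_i_ne A i j'.val b.prop, if_neg hbv, zero_mul]
      · intro h; exact absurd (Finset.mem_univ j') h
  apply le_antisymm
  · intro y hy
    rw [LinearMap.mem_ker, Matrix.mulVecLin_apply] at hy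
    have claim1 : ∀ l' : {j : V // j ≠ i},
        (if l'.val = j'.val then A i j'.val else 0) * y i +
          (delRC A i).mulVec (fun u => y u.val) l' = 0 := by
      intro l'
      rw [← roweq y l', hy]
      rfl
    have hyi : y i = 0 := by
      have hsum : ∑ l' : {j : V // j ≠ i},
          x0 l' * ((if l'.val = j'.val then A i j'.val else 0) * y i +
            (delRC A i).mulVec (fun u => y u.val) l') = 0 :=
        Finset.sum_eq_zero fun l' _ => by rw [claim1 l', mul_zero]
      have hexp : ∑ l' : {j : V // j ≠ i},
          x0 l' * ((if l'.val = j'.val then A i j'.val else 0) * y i +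
            (delRC A i).mulVec (fun u => y u.val) l')
          = x0 j' * (A i j'.val * y i) +
            x0 ⬝ᵥ (delRC A i).mulVec (fun u => y u.val) := by
        rw [Finset.sum_congr rfl fun l' _ => mul_add (x0 l') _ _, Finset.sum_add_distrib]
        congr 1
        rw [Finset.sum_eq_single j']
        · rw [if_pos rfl, mul_comm (x0 j'), mul_assoc, mul_comm (y i), ← mul_assoc,
            mul_comm _ (x0 j'), mul_assoc]
        · intro b _ hb
          have hbv : b.val ≠ j'.val := fun h => hb (Subtype.ext h)
          rw [if_neg hbv, zero_mul, mul_zero]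
        · intro h; exact absurd (Finset.mem_univ j') h
      rw [hexp, pair_zero (delRC A i) hBsym x0 _ hB0, add_zero] at hsum
      rcases mul_eq_zero.mp hsum with h | h
      · exact absurd h hx0j
      rcases mul_eq_zero.mp h with h | h
      · exact absurd h hAij
      · exact h
    have hBx : (delRC A i).mulVec (fun u => y u.val) = 0 := by
      funext l'
      have := claim1 l'
      rw [hyi, mul_zero, zero_add] at this
      exact this
    have hxj : y j'.val = 0 := by
      have h0 : (pruneMat A i j'.val).mulVec y i = 0 := by rw [hy]; rfl
      rw [roweqi y, hyi, mul_zero, zero_add] at h0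
      exact (mul_eq_zero.mp h0).resolve_left hAij
    refine ⟨fun u => y u.val, ⟨?_, ?_⟩, ?_⟩
    · simp only [SetLike.mem_coe, LinearMap.mem_ker, Matrix.mulVecLin_apply]
      exact hBx
    · simp only [SetLike.mem_coe, LinearMap.mem_ker, LinearMap.proj_apply]
      exact hxj
    · funext v
      by_cases hv : v = i
      · rw [hv, ext0_apply_i, hyi]
      · rw [ext0_apply_ne i _ v hv]
  · rintro _ ⟨x, hxmem, rfl⟩
    obtain ⟨hxK, hxj⟩ := hxmem
    simp only [SetLike.mem_coe, LinearMap.mem_ker, Matrix.mulVecLin_apply] at hxK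
    simp only [SetLike.mem_coe, LinearMap.mem_ker, LinearMap.proj_apply] at hxj
    rw [LinearMap.mem_ker, Matrix.mulVecLin_apply]
    funext v
    show (pruneMat A i j'.val).mulVec (ext0 i x) v = 0
    by_cases hv : v = i
    · rw [hv, roweqi, ext0_apply_i, mul_zero, zero_add,
        ext0_apply_ne i x j'.val j'.prop]
      simp only [Subtype.coe_eta, hxj, mul_zero]
    · have hre := roweq (ext0 i x) ⟨v, hv⟩
      rw [show (fun u : {j : V // j ≠ i} => ext0 i x u.val) = x from
          funext fun u => ext0_apply_ne i x u.val u.prop] at hre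
      rw [show ((pruneMat A i j'.val).mulVec (ext0 i x)) v
          = ((pruneMat A i j'.val).mulVec (ext0 i x)) (⟨v, hv⟩ : {j : V // j ≠ i}).val from rfl,
        hre, ext0_apply_i, mul_zero, zero_add, hxK]
      rfl

set_option maxHeartbeats 1000000 in
set_option synthInstance.maxHeartbeats 400000 in
lemma nullity_pruneMat (A : Matrix V V ℝ) (i : V) (k : ℕ) (j' : {j : V // j ≠ i})
    (x0 : {j : V // j ≠ i} → ℝ) (hsym : A.IsSymm)
    (hB0 : (delRC A i).mulVec x0 = 0) (hAij : A i j'.val ≠ 0) (hx0j : x0 j' ≠ 0)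
    (h2 : nullity (delRC A i) = k + 1) :
    nullity (pruneMat A i j'.val) = k := by
  classical
  set K := LinearMap.ker (delRC A i).mulVecLin with hK
  set f : ({j : V // j ≠ i} → ℝ) →ₗ[ℝ] ℝ :=
    LinearMap.proj (R := ℝ) (φ := fun _ : {j : V // j ≠ i} => ℝ) j' with hf
  set g := f.domRestrict K with hg
  have hx0K : x0 ∈ K := by
    rw [hK, LinearMap.mem_ker, Matrix.mulVecLin_apply, hB0]
  have hrange : LinearMap.range g = ⊤ := by
    rw [eq_top_iff]
    rintro r -
    refine ⟨(r / x0 j') • ⟨x0, hx0K⟩, ?_⟩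
    show (r / x0 j') • (x0 j') = r
    rw [smul_eq_mul, div_mul_cancel₀ r hx0j]
  have hkerfin : Module.finrank ℝ (LinearMap.ker g) = k := by
    have hrn := LinearMap.finrank_range_add_finrank_ker g
    rw [hrange, finrank_top] at hrn
    have hKfin : Module.finrank ℝ K = k + 1 := h2
    rw [hKfin, Module.finrank_self] at hrn
    omega
  have hmapsub : Submodule.map K.subtype (LinearMap.ker g) = K ⊓ LinearMap.ker f := by
    rw [hg, LinearMap.ker_domRestrict, Submodule.map_comap_subtype]
  have e1 : Module.finrank ℝ (LinearMap.ker g) =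
      Module.finrank ℝ (Submodule.map K.subtype (LinearMap.ker g)) :=
    (Submodule.equivMapOfInjective K.subtype K.injective_subtype
      (LinearMap.ker g)).finrank_eq
  have e2 : Module.finrank ℝ (K ⊓ LinearMap.ker f : Submodule ℝ _) =
      Module.finrank ℝ (Submodule.map (ext0 i) (K ⊓ LinearMap.ker f)) :=
    (Submodule.equivMapOfInjective (ext0 i) (ext0_inj i) (K ⊓ LinearMap.ker f)).finrank_eq
  show Module.finrank ℝ (LinearMap.ker (pruneMat A i j'.val).mulVecLin) = k
  rw [ker_pruneMat A i j' x0 hsym hB0 hAij hx0j, ← e2, ← hmapsub, ← e1, hkerfin]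

lemma rows_ne_zero (A : Matrix V V ℝ) (i : V) (j' : {j : V // j ≠ i})
    (x0 : {j : V // j ≠ i} → ℝ) (hsym : A.IsSymm)
    (hB0 : (delRC A i).mulVec x0 = 0) (hAij : A i j'.val ≠ 0) (hx0j : x0 j' ≠ 0)
    (y : V → ℝ)
    (hr : ∀ l' : {j : V // j ≠ i}, (pruneMat A i j'.val).mulVec y l'.val = 0) :
    y i = 0 := by
  have hBsym : (delRC A i).IsSymm := delRC_isSymm A i hsym
  have claim1 : ∀ l' : {j : V // j ≠ i},
      (if l'.val = j'.val then A i j'.val else 0) * y i +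
        (delRC A i).mulVec (fun u => y u.val) l' = 0 := by
    intro l'
    have e : (pruneMat A i j'.val).mulVec y l'.val
        = (if l'.val = j'.val then A i j'.val else 0) * y i +
          (delRC A i).mulVec (fun u => y u.val) l' := by
      rw [show (pruneMat A i j'.val).mulVec y l'.val
          = ∑ u, pruneMat A i j'.val l'.val u * y u from rfl, sum_split i]
      congr 1
      · rw [pruneMat_ne_i A i j'.val l'.prop]
      · simp only [mulVec, dotProduct, delRC, submatrix_apply]
        exact Finset.sum_congr rfl fun u _ => by
          rw [pruneMat_ne_ne A i j'.val l'.prop u.prop]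
    rw [← e, hr l']
  have hsum : ∑ l' : {j : V // j ≠ i},
      x0 l' * ((if l'.val = j'.val then A i j'.val else 0) * y i +
        (delRC A i).mulVec (fun u => y u.val) l') = 0 :=
    Finset.sum_eq_zero fun l' _ => by rw [claim1 l', mul_zero]
  have hexp : ∑ l' : {j : V // j ≠ i},
      x0 l' * ((if l'.val = j'.val then A i j'.val else 0) * y i +
        (delRC A i).mulVec (fun u => y u.val) l')
      = x0 j' * (A i j'.val * y i) +
        x0 ⬝ᵥ (delRC A i).mulVec (fun u => y u.val) := by
    rw [Finset.sum_congr rfl fun l' _ => mul_add (x0 l') _ _, Finset.sum_add_distrib]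
    congr 1
    rw [Finset.sum_eq_single j']
    · rw [if_pos rfl]
    · intro b _ hb
      have hbv : b.val ≠ j'.val := fun h => hb (Subtype.ext h)
      rw [if_neg hbv, zero_mul, mul_zero]
    · intro h; exact absurd (Finset.mem_univ j') h
  rw [hexp, pair_zero (delRC A i) hBsym x0 _ hB0, add_zero] at hsum
  rcases mul_eq_zero.mp hsum with h | h
  · exact absurd h hx0j
  rcases mul_eq_zero.mp h with h | h
  · exact absurd h hAij
  · exact h

lemma snip_pruneMat (A : Matrix V V ℝ) (i : V) (j' : {j : V // j ≠ i})
    (x0 : {j : V // j ≠ i} → ℝ) (hsym : A.IsSymm)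
    (hB0 : (delRC A i).mulVec x0 = 0) (hAij : A i j'.val ≠ 0) (hx0j : x0 j' ≠ 0)
    (hsnip : HasSNIP A i) : HasSNIP (pruneMat A i j'.val) i := by
  intro X hXsym hHad hdiag hrows
  -- column/row i of X vanishes
  have hcol : ∀ m : V, X i m = 0 := by
    intro m
    by_cases hm : m = i
    · rw [hm]; exact hdiag i
    · exact rows_ne_zero A i j' x0 hsym hB0 hAij hx0j (fun v => X v m)
        (fun l' => hrows l'.val m l'.prop)
  have hrow : ∀ m : V, X m i = 0 := by
    intro m
    rw [← hXsym.apply m i]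
    exact hcol m
  apply hsnip X hXsym
  · intro l m
    by_cases hl : l = i
    · rw [hl, hcol m, mul_zero]
    by_cases hm : m = i
    · rw [hm, hrow l, mul_zero]
    · rw [← pruneMat_ne_ne A i j'.val hl hm]
      exact hHad l m
  · exact hdiag
  · intro l m hl
    have : (A * X) l m = (pruneMat A i j'.val * X) l m := by
      rw [Matrix.mul_apply, Matrix.mul_apply, sum_split i, sum_split i]
      congr 1
      · rw [hcol m, mul_zero, mul_zero]
      · exact Finset.sum_congr rfl fun u _ => by
          rw [pruneMat_ne_ne A i j'.val hl u.prop]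
    rw [this]
    exact hrows l m hl

lemma inS_pruneMat (G : SimpleGraph V) (A : Matrix V V ℝ) (i : V) (j' : {j : V // j ≠ i})
    (hA : InS G A) (hadj : G.Adj i j'.val) (hAij : A i j'.val ≠ 0) :
    InS (pruneAt G i j'.val) (pruneMat A i j'.val) := by
  refine ⟨pruneMat_isSymm A i j'.val hA.1, ?_⟩
  intro u v huv
  by_cases hu : u = i
  · have hv : v ≠ i := fun h => huv (by rw [hu, h])
    rw [hu, pruneMat_i_ne A i j'.val hv]
    by_cases hvj : v = j'.val
    · rw [if_pos hvj]
      constructor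
      · intro _
        rw [hvj]
        exact ⟨hadj, fun _ => rfl, fun h => absurd h j'.prop⟩
      · intro _; exact hAij
    · rw [if_neg hvj]
      constructor
      · intro h; exact absurd rfl h
      · intro h; exact absurd (h.2.1 rfl) hvj
  · by_cases hv : v = i
    · rw [hv, pruneMat_ne_i A i j'.val hu]
      by_cases huj : u = j'.val
      · rw [if_pos huj]
        constructor
        · intro _
          rw [huj]
          exact ⟨hadj.symm, fun h => absurd h j'.prop, fun _ => rfl⟩
        · intro _; exact hAij
      · rw [if_neg huj]
        constructor
        · intro h; exact absurd rfl h
        · intro h; exact absurd (h.2.2 rfl) huj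
    · rw [pruneMat_ne_ne A i j'.val hu hv]
      constructor
      · intro h
        exact ⟨(hA.2 u v huv).mp h, fun h' => absurd h' hu, fun h' => absurd h' hv⟩
      · intro h
        exact (hA.2 u v huv).mpr h.1

theorem stmt19 (G : SimpleGraph V) (i : V) (k : ℕ) (hcard : 2 ≤ Fintype.card V)
    (A : Matrix V V ℝ) (hA : InS G A) (hsnip : HasSNIP A i)
    (h1 : nullity A = k) (h2 : nullity (delRC A i) = k + 1) :
    (∃ j : V, G.Adj i j ∧ ∃ A' : Matrix V V ℝ, InS (pruneAt G i j) A' ∧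
      HasSNIP A' i ∧ nullity A' = k ∧ nullity (delRC A' i) = k + 1) ∧
    ((¬ ∃! j : V, G.Adj i j) →
      ∃ G' : SimpleGraph V, G' < G ∧ ∃ A' : Matrix V V ℝ, InS G' A' ∧
        HasSNIP A' i ∧ nullity A' = k ∧ nullity (delRC A' i) = k + 1) := by
  obtain ⟨j', x0, hB0, hAij, hx0j⟩ := exists_good A i k h1 h2
  have hadj : G.Adj i j'.val := (hA.2 i j'.val (Ne.symm j'.prop)).mp hAij
  have hInS' := inS_pruneMat G A i j' hA hadj hAij
  have hsnip' := snip_pruneMat A i j' x0 hA.1 hB0 hAij hx0j hsnip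
  have hnull' := nullity_pruneMat A i k j' x0 hA.1 hB0 hAij hx0j h2
  have hnulli' : nullity (delRC (pruneMat A i j'.val) i) = k + 1 := by
    rw [show delRC (pruneMat A i j'.val) i = delRC A i from delRC_pruneMat A i j'.val]
    exact h2
  constructor
  · exact ⟨j'.val, hadj, pruneMat A i j'.val, hInS', hsnip', hnull', hnulli'⟩
  · intro hne
    have hnall : ¬ ∀ y, G.Adj i y → y = j'.val := fun hall => hne ⟨j'.val, hadj, hall⟩
    push_neg at hnall
    obtain ⟨j₂, hadj₂, hj₂⟩ := hnall
    refine ⟨pruneAt G i j'.val, ?_, pruneMat A i j'.val, hInS', hsnip', hnull', hnulli'⟩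
    apply lt_of_le_of_ne
    · intro a b hab
      exact hab.1
    · intro heq
      rw [← heq] at hadj₂
      exact hj₂ (hadj₂.2.1 rfl)
end
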